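/- For n ≥ 4, the rank of the monoid IOF_n^par (the least cardinality of a generating set) equals 3n−6. -/
import Mathlib


/-- A partial injection on `{1,...,n}`, represented by its graph. -/
structure PInj (n : ℕ) where
  R : ℕ → ℕ → Prop
  memL : ∀ ⦃x y⦄, R x y → x ∈ Set.Icc 1 n
  memR : ∀ ⦃x y⦄, R x y → y ∈ Set.Icc 1 n
  func : ∀ ⦃x y y'⦄, R x y → R x y' → y = y'
  inj : ∀ ⦃x x' y⦄, R x y → R x' y → x = x'

namespace PInj

variable {n : ℕ}

@[ext] theorem ext {a b : PInj n} (h : ∀ x y, a.R x y ↔ b.R x y) : a = b := by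
  cases a; cases b
  simp only [mk.injEq]
  funext x y
  exact propext (h x y)

instance : Mul (PInj n) :=
  ⟨fun a b =>
    { R := fun x z => ∃ y, a.R x y ∧ b.R y z
      memL := by rintro x z ⟨y, h1, _⟩; exact a.memL h1
      memR := by rintro x z ⟨y, _, h2⟩; exact b.memR h2
      func := by
        rintro x z z' ⟨y, h1, h2⟩ ⟨y', h1', h2'⟩
        obtain rfl := a.func h1 h1'
        exact b.func h2 h2'
      inj := by
        rintro x x' z ⟨y, h1, h2⟩ ⟨y', h1', h2'⟩
        obtain rfl := b.inj h2 h2'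
        exact a.inj h1 h1' }⟩

instance : One (PInj n) :=
  ⟨{ R := fun x y => x ∈ Set.Icc 1 n ∧ y = x
     memL := by rintro x y ⟨h, rfl⟩; exact h
     memR := by rintro x y ⟨h, rfl⟩; exact h
     func := by rintro x y y' ⟨_, rfl⟩ ⟨_, rfl⟩; rfl
     inj := by rintro x x' y ⟨_, rfl⟩ ⟨_, h⟩; exact h }⟩

instance : Monoid (PInj n) where
  mul_assoc a b c := by
    ext x y
    constructor
    · rintro ⟨z, ⟨w, h1, h2⟩, h3⟩; exact ⟨w, h1, z, h2, h3⟩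
    · rintro ⟨w, h1, z, h2, h3⟩; exact ⟨z, ⟨w, h1, h2⟩, h3⟩
  one_mul a := by
    ext x y
    constructor
    · rintro ⟨z, ⟨_, rfl⟩, h⟩; exact h
    · intro h; exact ⟨x, ⟨a.memL h, rfl⟩, h⟩
  mul_one a := by
    ext x y
    constructor
    · rintro ⟨z, h, _, rfl⟩; exact h
    · intro h; exact ⟨y, h, a.memR h, rfl⟩

/-- The inverse of a partial injection. -/
def inv (a : PInj n) : PInj n where
  R := fun x y => a.R y x
  memL := by intro x y h; exact a.memR h
  memR := by intro x y h; exact a.memL h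
  func := by intro x y y' h h'; exact a.inj h h'
  inj := by intro x x' y h h'; exact a.func h h'

/-- The domain of a partial injection. -/
def dom (a : PInj n) : Set ℕ := {x | ∃ y, a.R x y}

/-- The image of a partial injection. -/
def im (a : PInj n) : Set ℕ := {y | ∃ x, a.R x y}

end PInj

/-- The strict fence (zig-zag) order on `{1,...,n}`: `x ≺ y` iff `x` is odd and
`x`, `y` are adjacent.  It is generated by `i ≺ i+1` for odd `i` and `i+1 ≺ i`
for even `i`. -/
def FenceLt (x y : ℕ) : Prop := Odd x ∧ (y = x + 1 ∨ x = y + 1)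

/-- Membership in `IOF_n^par`: order-preserving, parity-preserving,
fence-preserving, and with fence-preserving inverse. -/
def IsIOF {n : ℕ} (a : PInj n) : Prop :=
  (∀ ⦃x y x' y'⦄, a.R x y → a.R x' y' → x < x' → y < y') ∧
  (∀ ⦃x y⦄, a.R x y → x % 2 = y % 2) ∧
  (∀ ⦃x y x' y'⦄, a.R x y → a.R x' y' → FenceLt x x' → FenceLt y y') ∧
  (∀ ⦃x y x' y'⦄, a.R x y → a.R x' y' → FenceLt y y' → FenceLt x x')

/-- A partial identity: every point of the domain is fixed. -/
def IsPartialId {n : ℕ} (a : PInj n) : Prop := ∀ ⦃x y⦄, a.R x y → y = x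

/-- The partial identity `v_i` with domain `{1,...,n} \ {i}`. -/
def vMap (n i : ℕ) : PInj n where
  R := fun x y => x ∈ Set.Icc 1 n ∧ x ≠ i ∧ y = x
  memL := by rintro x y ⟨h, _, rfl⟩; exact h
  memR := by rintro x y ⟨h, _, rfl⟩; exact h
  func := by rintro x y y' ⟨_, _, rfl⟩ ⟨_, _, rfl⟩; rfl
  inj := by rintro x x' y ⟨_, _, rfl⟩ ⟨_, _, h⟩; exact h

/-- The map `u_i` with domain `{1,...,i} ∪ {i+4,...,n}`, sending `ρ ↦ ρ+2` for
`ρ ≤ i` and `ρ ↦ ρ` for `ρ ≥ i+4`. -/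
def uMap (n i : ℕ) : PInj n where
  R := fun x y => x ∈ Set.Icc 1 n ∧ y ∈ Set.Icc 1 n ∧
        ((x ≤ i ∧ y = x + 2) ∨ (i + 4 ≤ x ∧ y = x))
  memL := by rintro x y ⟨h, _, _⟩; exact h
  memR := by rintro x y ⟨_, h, _⟩; exact h
  func := by
    rintro x y y' ⟨_, _, (⟨hx, rfl⟩ | ⟨hx, rfl⟩)⟩ ⟨_, _, (⟨hx', rfl⟩ | ⟨hx', rfl⟩)⟩ <;> omega
  inj := by
    rintro x x' y ⟨_, _, (⟨hx, rfl⟩ | ⟨hx, rfl⟩)⟩ ⟨_, _, (⟨hx', h'⟩ | ⟨hx', h'⟩)⟩ <;> omega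

/-- The set `J_i = {1,...,i} ∪ {i+4,...,n}`. -/
def Jset (n i : ℕ) : Set ℕ := {x | (1 ≤ x ∧ x ≤ i) ∨ (i + 4 ≤ x ∧ x ≤ n)}

/-- `G` is a generating set of the monoid `IOF_n^par`: it consists of elements of
`IOF_n^par` and every element of `IOF_n^par` is a finite product of elements of `G`. -/
def Generates (n : ℕ) (G : Set (PInj n)) : Prop :=
  (∀ g ∈ G, IsIOF g) ∧
  ∀ a : PInj n, IsIOF a →
    ∃ l : List (PInj n), (∀ b ∈ l, b ∈ G) ∧ l.prod = a


namespace PInj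
variable {n : ℕ}

theorem mul_R {a b : PInj n} {x z : ℕ} : (a * b).R x z ↔ ∃ y, a.R x y ∧ b.R y z := Iff.rfl

theorem one_R {x y : ℕ} : (1 : PInj n).R x y ↔ x ∈ Set.Icc 1 n ∧ y = x := Iff.rfl

theorem inv_R {a : PInj n} {x y : ℕ} : a.inv.R x y ↔ a.R y x := Iff.rfl

theorem inv_inv (a : PInj n) : a.inv.inv = a := by ext x y; exact Iff.rfl

theorem inv_injective : Function.Injective (inv : PInj n → PInj n) := by
  intro a b h
  ext x y
  constructor
  · intro hx; exact (show b.inv.R y x from h ▸ (inv_R.mpr hx))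
  · intro hx; exact (show a.inv.R y x by rw [h]; exact inv_R.mpr hx)

theorem mul_inv_rev (a b : PInj n) : (a * b).inv = b.inv * a.inv := by
  ext x y
  constructor
  · rintro ⟨z, h1, h2⟩; exact ⟨z, h2, h1⟩
  · rintro ⟨z, h1, h2⟩; exact ⟨z, h2, h1⟩

theorem inv_one : (1 : PInj n).inv = 1 := by
  ext x y
  constructor
  · rintro ⟨h, rfl⟩; exact ⟨h, rfl⟩
  · rintro ⟨h, rfl⟩; exact ⟨h, rfl⟩

theorem list_prod_inv (l : List (PInj n)) :
    (l.reverse.map inv).prod = l.prod.inv := by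
  induction l with
  | nil => simpa using inv_one.symm
  | cons g t ih =>
      simp only [List.reverse_cons, List.map_append, List.prod_append, List.map_cons,
        List.prod_cons, List.map_nil, List.prod_nil, List.prod_cons, mul_one, ih]
      rw [mul_inv_rev]

end PInj

/-- Pointwise characterization of membership in `IOF_n^par`. -/
def Good {n : ℕ} (a : PInj n) : Prop :=
  (∀ ⦃x y⦄, a.R x y → x % 2 = y % 2) ∧
  (∀ ⦃x y x' y'⦄, a.R x y → a.R x' y' →
    (x' = x + 1 → y' = y + 1) ∧ (x + 2 ≤ x' → y + 2 ≤ y'))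

theorem good_iff {n : ℕ} (a : PInj n) : IsIOF a ↔ Good a := by
  constructor
  · rintro ⟨hord, hpar, hf, hfi⟩
    refine ⟨hpar, ?_⟩
    intro x y x' y' h h'
    constructor
    · intro hx1
      have hyy : y < y' := hord h h' (by omega)
      rcases Nat.even_or_odd x with hx | hx
      · -- x even, x' = x+1 odd : FenceLt x' x
        have hfl : FenceLt x' x := ⟨by rw [hx1]; exact Even.add_one hx, Or.inr hx1⟩
        have := hf h' h hfl
        rcases this.2 with h2 | h2 <;> omega
      · have hfl : FenceLt x x' := ⟨hx, Or.inl hx1⟩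
        have := hf h h' hfl
        rcases this.2 with h2 | h2 <;> omega
    · intro hx2
      have hyy : y < y' := hord h h' (by omega)
      by_contra hcon
      have hy1 : y' = y + 1 := by omega
      rcases Nat.even_or_odd y with hy | hy
      · have hfl : FenceLt y' y := ⟨by rw [hy1]; exact Even.add_one hy, Or.inr hy1⟩
        have := hfi h' h hfl
        rcases this.2 with h2 | h2 <;> omega
      · have hfl : FenceLt y y' := ⟨hy, Or.inl hy1⟩
        have := hfi h h' hfl
        rcases this.2 with h2 | h2 <;> omega
  · rintro ⟨hpar, hrule⟩
    have hord : ∀ ⦃x y x' y'⦄, a.R x y → a.R x' y' → x < x' → y < y' := by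
      intro x y x' y' h h' hlt
      rcases Nat.lt_or_ge x' (x + 2) with h2 | h2
      · have := (hrule h h').1 (by omega); omega
      · have := (hrule h h').2 h2; omega
    refine ⟨hord, hpar, ?_, ?_⟩
    · rintro x y x' y' h h' ⟨hodd, hadj⟩
      rw [Nat.odd_iff] at hodd
      have hp := hpar h
      rcases hadj with h1 | h1
      · have := (hrule h h').1 h1
        exact ⟨Nat.odd_iff.mpr (by omega), Or.inl this⟩
      · have := (hrule h' h).1 h1
        exact ⟨Nat.odd_iff.mpr (by omega), Or.inr this⟩
    · rintro x y x' y' h h' ⟨hodd, hadj⟩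
      rw [Nat.odd_iff] at hodd
      have hp := hpar h
      have hp' := hpar h'
      rcases Nat.lt_trichotomy x x' with hlt | heq | hgt
      · have hyy : y < y' := hord h h' hlt
        have hx1 : x' = x + 1 := by
          by_contra hcon
          have hx2 : x + 2 ≤ x' := by omega
          have := (hrule h h').2 hx2
          rcases hadj with h1 | h1 <;> omega
        have := (hrule h h').1 hx1
        exact ⟨Nat.odd_iff.mpr (by omega), Or.inl hx1⟩
      · subst heq
        have := a.func h h'
        rcases hadj with h1 | h1 <;> omega
      · have hyy : y' < y := hord h' h hgt
        have hx1 : x = x' + 1 := by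
          by_contra hcon
          have hx2 : x' + 2 ≤ x := by omega
          have := (hrule h' h).2 hx2
          rcases hadj with h1 | h1 <;> omega
        have := (hrule h' h).1 hx1
        exact ⟨Nat.odd_iff.mpr (by omega), Or.inr hx1⟩

theorem good_one {n : ℕ} : Good (1 : PInj n) := by
  constructor
  · rintro x y ⟨h, rfl⟩; rfl
  · rintro x y x' y' ⟨h, rfl⟩ ⟨h', rfl⟩; omega

theorem good_mul {n : ℕ} {a b : PInj n} (ha : Good a) (hb : Good b) : Good (a * b) := by
  constructor
  · rintro x y ⟨z, h1, h2⟩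
    have := ha.1 h1; have := hb.1 h2; omega
  · rintro x y x' y' ⟨z, h1, h2⟩ ⟨z', h1', h2'⟩
    have r1 := ha.2 h1 h1'
    have r2 := hb.2 h2 h2'
    constructor
    · intro h; exact r2.1 (r1.1 h)
    · intro h; exact r2.2 (r1.2 h)

theorem good_inv {n : ℕ} {a : PInj n} (ha : Good a) : Good a.inv := by
  constructor
  · intro x y h; exact (ha.1 h).symm
  · intro x y x' y' h h'
    rw [PInj.inv_R] at h h'
    have hpar := ha.1 h; have hpar' := ha.1 h'
    constructor
    · intro h1
      -- x' = x + 1, a.R y x, a.R y' x' ; show y' = y + 1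
      rcases Nat.lt_trichotomy y y' with hlt | heq | hgt
      · rcases Nat.lt_or_ge y' (y+2) with h2 | h2
        · have := (ha.2 h h').1 (by omega); omega
        · have := (ha.2 h h').2 h2; omega
      · subst heq; have := a.func h h'; omega
      · rcases Nat.lt_or_ge y (y'+2) with h2 | h2
        · have := (ha.2 h' h).1 (by omega); omega
        · have := (ha.2 h' h).2 h2; omega
    · intro h2
      rcases Nat.lt_trichotomy y y' with hlt | heq | hgt
      · rcases Nat.lt_or_ge y' (y+2) with hc | hc
        · have := (ha.2 h h').1 (by omega); omega
        · omega
      · subst heq; have := a.func h h'; omega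
      · rcases Nat.lt_or_ge y (y'+2) with hc | hc
        · have := (ha.2 h' h).1 (by omega); omega
        · have := (ha.2 h' h).2 hc; omega

theorem good_prod {n : ℕ} (l : List (PInj n)) (h : ∀ g ∈ l, Good g) : Good l.prod := by
  induction l with
  | nil => exact good_one
  | cons g t ih =>
      rw [List.prod_cons]
      exact good_mul (h g (by simp)) (ih (fun b hb => h b (by simp [hb])))

/-- `w_i` : identity on `{1,...,i}` and `x ↦ x-2` on `{i+4,...,n}`. -/
def wMap (n i : ℕ) : PInj n where
  R := fun x y => x ∈ Set.Icc 1 n ∧ y ∈ Set.Icc 1 n ∧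
        ((x ≤ i ∧ y = x) ∨ (i + 4 ≤ x ∧ y + 2 = x))
  memL := by rintro x y ⟨h, _, _⟩; exact h
  memR := by rintro x y ⟨_, h, _⟩; exact h
  func := by rintro x y y' ⟨_, _, (⟨hx, h⟩ | ⟨hx, h⟩)⟩ ⟨_, _, (⟨hx', h'⟩ | ⟨hx', h'⟩)⟩ <;> omega
  inj := by rintro x x' y ⟨h0, _, (⟨hx, h⟩ | ⟨hx, h⟩)⟩ ⟨h0', _, (⟨hx', h'⟩ | ⟨hx', h'⟩)⟩ <;>
    simp only [Set.mem_Icc] at * <;> omega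

/-- `z_P` : identity on `{1,...,P}`, `x ↦ x+2` on `{P+2,...,n-2}`. -/
def zMap (n P : ℕ) : PInj n where
  R := fun x y => x ∈ Set.Icc 1 n ∧ y ∈ Set.Icc 1 n ∧
        ((x ≤ P ∧ y = x) ∨ (P + 2 ≤ x ∧ y = x + 2))
  memL := by rintro x y ⟨h, _, _⟩; exact h
  memR := by rintro x y ⟨_, h, _⟩; exact h
  func := by rintro x y y' ⟨_, _, (⟨hx, h⟩ | ⟨hx, h⟩)⟩ ⟨_, _, (⟨hx', h'⟩ | ⟨hx', h'⟩)⟩ <;> omega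
  inj := by rintro x x' y ⟨h0, _, (⟨hx, h⟩ | ⟨hx, h⟩)⟩ ⟨h0', _, (⟨hx', h'⟩ | ⟨hx', h'⟩)⟩ <;>
    simp only [Set.mem_Icc] at * <;> omega

/-- `h_{P,m}` : identity on `{1,...,P}`, `x ↦ x+2` on `{P+2,...,m}` (on `{1,…,m}`
if `P = 0`), identity on `{m+4,...,n}`. -/
def hMap (n P m : ℕ) : PInj n where
  R := fun x y => x ∈ Set.Icc 1 n ∧ y ∈ Set.Icc 1 n ∧
        ((x ≤ P ∧ y = x) ∨ ((P = 0 ∨ P + 2 ≤ x) ∧ x ≤ m ∧ y = x + 2) ∨ (m + 4 ≤ x ∧ y = x))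
  memL := by rintro x y ⟨h, _, _⟩; exact h
  memR := by rintro x y ⟨_, h, _⟩; exact h
  func := by
    rintro x y y' ⟨h0, _, (⟨hx, h⟩ | ⟨hx, hx2, h⟩ | ⟨hx, h⟩)⟩
      ⟨h0', _, (⟨hx', h'⟩ | ⟨hx', hx2', h'⟩ | ⟨hx', h'⟩)⟩ <;>
    simp only [Set.mem_Icc] at * <;> omega
  inj := by
    rintro x x' y ⟨h0, h1, (⟨hx, h⟩ | ⟨hx, hx2, h⟩ | ⟨hx, h⟩)⟩
      ⟨h0', h1', (⟨hx', h'⟩ | ⟨hx', hx2', h'⟩ | ⟨hx', h'⟩)⟩ <;>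
    simp only [Set.mem_Icc] at * <;> omega

/-- Partial identity with domain `{x ∈ Icc 1 n | Q x}`. -/
def eMap (n : ℕ) (Q : ℕ → Prop) : PInj n where
  R := fun x y => x ∈ Set.Icc 1 n ∧ Q x ∧ y = x
  memL := by rintro x y ⟨h, _, rfl⟩; exact h
  memR := by rintro x y ⟨h, _, rfl⟩; exact h
  func := by rintro x y y' ⟨_, _, rfl⟩ ⟨_, _, rfl⟩; rfl
  inj := by rintro x x' y ⟨_, _, rfl⟩ ⟨_, _, h⟩; exact h

theorem good_vMap (n i : ℕ) : Good (vMap n i) := by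
  constructor
  · rintro x y ⟨_, _, rfl⟩; rfl
  · rintro x y x' y' ⟨_, _, rfl⟩ ⟨_, _, rfl⟩; omega

theorem good_eMap (n : ℕ) (Q : ℕ → Prop) : Good (eMap n Q) := by
  constructor
  · rintro x y ⟨_, _, rfl⟩; rfl
  · rintro x y x' y' ⟨_, _, rfl⟩ ⟨_, _, rfl⟩; omega

theorem good_uMap (n i : ℕ) : Good (uMap n i) := by
  constructor
  · rintro x y ⟨_, _, (⟨_, rfl⟩ | ⟨_, rfl⟩)⟩ <;> omega
  · rintro x y x' y' ⟨h1, h2, (⟨hx, rfl⟩ | ⟨hx, rfl⟩)⟩ ⟨h1', h2', (⟨hx', rfl⟩ | ⟨hx', rfl⟩)⟩ <;>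
      simp only [Set.mem_Icc] at * <;> omega

theorem good_wMap (n i : ℕ) : Good (wMap n i) := by
  constructor
  · rintro x y ⟨_, _, (⟨_, rfl⟩ | ⟨_, h⟩)⟩ <;> omega
  · rintro x y x' y' ⟨h1, h2, (⟨hx, rfl⟩ | ⟨hx, hy⟩)⟩ ⟨h1', h2', (⟨hx', rfl⟩ | ⟨hx', hy'⟩)⟩ <;>
      simp only [Set.mem_Icc] at * <;> omega

theorem good_hMap (n P m : ℕ) : Good (hMap n P m) := by
  constructor
  · rintro x y ⟨_, _, (⟨_, rfl⟩ | ⟨_, _, rfl⟩ | ⟨_, rfl⟩)⟩ <;> omega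
  · rintro x y x' y' ⟨h1, h2, (⟨hx, rfl⟩ | ⟨hg, hx, rfl⟩ | ⟨hx, rfl⟩)⟩
      ⟨h1', h2', (⟨hx', rfl⟩ | ⟨hg', hx', rfl⟩ | ⟨hx', rfl⟩)⟩ <;>
      simp only [Set.mem_Icc] at * <;> omega

section Distinct
variable {n : ℕ} (hn : 4 ≤ n)

theorem uR13 {i : ℕ} (hi : 1 ≤ i) (hn : 4 ≤ n) : (uMap n i).R 1 3 := by
  refine ⟨by simp [Set.mem_Icc]; omega, by simp [Set.mem_Icc]; omega, Or.inl ⟨hi, rfl⟩⟩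

theorem wR11 {i : ℕ} (hi : 1 ≤ i) (hn : 4 ≤ n) : (wMap n i).R 1 1 := by
  refine ⟨by simp [Set.mem_Icc]; omega, by simp [Set.mem_Icc]; omega, Or.inl ⟨hi, rfl⟩⟩

theorem v_ne_v {i j : ℕ} (hi : 1 ≤ i) (hin : i ≤ n) (hij : i ≠ j) :
    vMap n i ≠ vMap n j := by
  intro h
  have : (vMap n j).R i i := ⟨by simp [Set.mem_Icc]; omega, by omega, rfl⟩
  rw [← h] at this
  exact this.2.1 rfl

theorem u_ne_u {i j : ℕ} (hij : i < j) (hjn : j ≤ n - 2) (hn : 4 ≤ n) :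
    uMap n i ≠ uMap n j := by
  intro h
  have : (uMap n j).R (i+1) (i+3) := by
    refine ⟨by simp [Set.mem_Icc]; omega, by simp [Set.mem_Icc]; omega, Or.inl ⟨by omega, rfl⟩⟩
  rw [← h] at this
  rcases this.2.2 with ⟨h1, h2⟩ | ⟨h1, h2⟩ <;> omega

theorem w_ne_w {i j : ℕ} (hij : i < j) (hjn : j ≤ n - 2) (hn : 4 ≤ n) :
    wMap n i ≠ wMap n j := by
  intro h
  have : (wMap n j).R (i+1) (i+1) := by
    refine ⟨by simp [Set.mem_Icc]; omega, by simp [Set.mem_Icc]; omega, Or.inl ⟨by omega, rfl⟩⟩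
  rw [← h] at this
  rcases this.2.2 with ⟨h1, h2⟩ | ⟨h1, h2⟩ <;> omega

theorem u_ne_w {i j : ℕ} (hi : 1 ≤ i) (hj : 1 ≤ j) (hn : 4 ≤ n) :
    uMap n i ≠ wMap n j := by
  intro h
  have := uR13 hi hn (n := n)
  rw [h] at this
  rcases this.2.2 with ⟨h1, h2⟩ | ⟨h1, h2⟩ <;> omega

theorem v_ne_u {i j : ℕ} (hj : 1 ≤ j) (hn : 4 ≤ n) : vMap n i ≠ uMap n j := by
  intro h
  have := uR13 hj hn (n := n)
  rw [← h] at this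
  have := this.2.2; omega

theorem v_ne_w {i j : ℕ} (hj : 1 ≤ j) (hjn : j ≤ n - 4) (hn : 4 ≤ n) :
    vMap n i ≠ wMap n j := by
  intro h
  have : (wMap n j).R (j+4) (j+2) := by
    refine ⟨by simp [Set.mem_Icc]; omega, by simp [Set.mem_Icc]; omega, Or.inr ⟨by omega, rfl⟩⟩
  rw [← h] at this
  have := this.2.2; omega

theorem v_ne_uinv {i j : ℕ} (hj : 1 ≤ j) (hn : 4 ≤ n) : vMap n i ≠ (uMap n j).inv := by
  intro h
  have : (uMap n j).inv.R 3 1 := PInj.inv_R.mpr (uR13 hj hn)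
  rw [← h] at this
  have := this.2.2; omega

theorem v_ne_winv {i j : ℕ} (hj : 1 ≤ j) (hjn : j ≤ n - 4) (hn : 4 ≤ n) :
    vMap n i ≠ (wMap n j).inv := by
  intro h
  have : (wMap n j).inv.R (j+2) (j+4) := PInj.inv_R.mpr
    ⟨by simp [Set.mem_Icc]; omega, by simp [Set.mem_Icc]; omega, Or.inr ⟨by omega, rfl⟩⟩
  rw [← h] at this
  have := this.2.2; omega

theorem u_ne_uinv {i j : ℕ} (hi : 1 ≤ i) (hn : 4 ≤ n) : uMap n i ≠ (uMap n j).inv := by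
  intro h
  have := uR13 hi hn (n := n)
  rw [h] at this
  rw [PInj.inv_R] at this
  rcases this.2.2 with ⟨h1, h2⟩ | ⟨h1, h2⟩ <;> omega

theorem u_ne_winv {i j : ℕ} (hi : 1 ≤ i) (hj : 1 ≤ j) (hn : 4 ≤ n) :
    uMap n i ≠ (wMap n j).inv := by
  intro h
  have := uR13 hi hn (n := n)
  rw [h] at this
  rw [PInj.inv_R] at this
  rcases this.2.2 with ⟨h1, h2⟩ | ⟨h1, h2⟩ <;> omega

theorem w_ne_uinv {i j : ℕ} (hi : 1 ≤ i) (hj : 1 ≤ j) (hn : 4 ≤ n) :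
    wMap n i ≠ (uMap n j).inv := by
  intro h
  have := wR11 hi hn (n := n)
  rw [h] at this
  rw [PInj.inv_R] at this
  rcases this.2.2 with ⟨h1, h2⟩ | ⟨h1, h2⟩ <;> omega

theorem w_ne_winv {i j : ℕ} (hi : 1 ≤ i) (hin : i ≤ n - 4) (hj : 1 ≤ j) (hn : 4 ≤ n) :
    wMap n i ≠ (wMap n j).inv := by
  intro h
  have : (wMap n i).R (i+4) (i+2) := by
    refine ⟨by simp [Set.mem_Icc]; omega, by simp [Set.mem_Icc]; omega, Or.inr ⟨by omega, rfl⟩⟩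
  rw [h] at this
  rw [PInj.inv_R] at this
  rcases this.2.2 with ⟨h1, h2⟩ | ⟨h1, h2⟩ <;> omega

end Distinct

section Products
variable {n : ℕ}

theorem vMap_R {i x y : ℕ} : (vMap n i).R x y ↔ (1 ≤ x ∧ x ≤ n) ∧ x ≠ i ∧ y = x := Iff.rfl

theorem uMap_R {i x y : ℕ} : (uMap n i).R x y ↔
    (1 ≤ x ∧ x ≤ n) ∧ (1 ≤ y ∧ y ≤ n) ∧ ((x ≤ i ∧ y = x + 2) ∨ (i + 4 ≤ x ∧ y = x)) := Iff.rfl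

theorem wMap_R {i x y : ℕ} : (wMap n i).R x y ↔
    (1 ≤ x ∧ x ≤ n) ∧ (1 ≤ y ∧ y ≤ n) ∧ ((x ≤ i ∧ y = x) ∨ (i + 4 ≤ x ∧ y + 2 = x)) := Iff.rfl

theorem zMap_R {P x y : ℕ} : (zMap n P).R x y ↔
    (1 ≤ x ∧ x ≤ n) ∧ (1 ≤ y ∧ y ≤ n) ∧ ((x ≤ P ∧ y = x) ∨ (P + 2 ≤ x ∧ y = x + 2)) := Iff.rfl

theorem hMap_R {P m x y : ℕ} : (hMap n P m).R x y ↔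
    (1 ≤ x ∧ x ≤ n) ∧ (1 ≤ y ∧ y ≤ n) ∧
    ((x ≤ P ∧ y = x) ∨ ((P = 0 ∨ P + 2 ≤ x) ∧ x ≤ m ∧ y = x + 2) ∨ (m + 4 ≤ x ∧ y = x)) := Iff.rfl

theorem eMap_R {Q : ℕ → Prop} {x y : ℕ} : (eMap n Q).R x y ↔
    (1 ≤ x ∧ x ≤ n) ∧ Q x ∧ y = x := Iff.rfl

/-- u_m ∘ c⁻ = w_m -/
theorem u_mul_cinv (m : ℕ) (hm : 1 ≤ m) (hmn : m + 2 ≤ n) :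
    uMap n m * (uMap n (n-2)).inv = wMap n m := by
  have hn : 4 ≤ n ∨ True := Or.inr trivial
  ext x y
  constructor
  · rintro ⟨z, h1, h2⟩
    rw [uMap_R] at h1
    rw [PInj.inv_R, uMap_R] at h2
    rw [wMap_R]
    omega
  · intro hw
    rw [wMap_R] at hw
    rcases hw with ⟨hx, hy, h | h⟩
    · refine ⟨x + 2, ?_, ?_⟩
      · rw [uMap_R]; omega
      · rw [PInj.inv_R, uMap_R]; omega
    · refine ⟨x, ?_, ?_⟩
      · rw [uMap_R]; omega
      · rw [PInj.inv_R, uMap_R]; omega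

/-- c⁺ ∘ (u_P)⁻¹ = z_P -/
theorem cplus_mul_uinv (P : ℕ) (hP : P ≤ n - 4) (hn : 4 ≤ n) :
    uMap n (n-2) * (uMap n P).inv = zMap n P := by
  ext x y
  constructor
  · rintro ⟨z, h1, h2⟩
    rw [uMap_R] at h1
    rw [PInj.inv_R, uMap_R] at h2
    rw [zMap_R]
    omega
  · intro hw
    rw [zMap_R] at hw
    rcases hw with ⟨hx, hy, h | h⟩
    · refine ⟨x + 2, ?_, ?_⟩
      · rw [uMap_R]; omega
      · rw [PInj.inv_R, uMap_R]; omega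
    · refine ⟨x + 2, ?_, ?_⟩
      · rw [uMap_R]; omega
      · rw [PInj.inv_R, uMap_R]; omega

/-- w_m ∘ z_P = h_{P,m} for P ≥ 1 -/
theorem w_mul_z (P m : ℕ) (hP : 1 ≤ P) (hPm : P + 2 ≤ m) (hmn : m ≤ n - 2) (hn : 4 ≤ n) :
    wMap n m * zMap n P = hMap n P m := by
  ext x y
  constructor
  · rintro ⟨z, h1, h2⟩
    rw [wMap_R] at h1
    rw [zMap_R] at h2
    rw [hMap_R]
    omega
  · intro hw
    rw [hMap_R] at hw
    rcases hw with ⟨hx, hy, h | h | h⟩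
    · refine ⟨x, ?_, ?_⟩
      · rw [wMap_R]; omega
      · rw [zMap_R]; omega
    · refine ⟨x, ?_, ?_⟩
      · rw [wMap_R]; omega
      · rw [zMap_R]; omega
    · refine ⟨x - 2, ?_, ?_⟩
      · rw [wMap_R]; omega
      · rw [zMap_R]; omega

theorem hMap_zero (m : ℕ) : hMap n 0 m = uMap n m := by
  ext x y
  rw [hMap_R, uMap_R]
  omega

/-- list of vs gives a partial identity -/
theorem v_list_prod (L : List ℕ) :
    (L.map (vMap n)).prod = eMap n (fun x => x ∉ L) := by
  induction L with
  | nil =>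
      ext x y
      simp only [List.map_nil, List.prod_nil]
      rw [eMap_R]
      constructor
      · rintro ⟨hx, h⟩; exact ⟨hx, by simp, h⟩
      · rintro ⟨hx, _, h⟩; exact ⟨hx, h⟩
  | cons j t ih =>
      simp only [List.map_cons, List.prod_cons, ih]
      ext x y
      constructor
      · rintro ⟨z, h1, h2⟩
        rw [vMap_R] at h1
        rw [eMap_R] at h2
        obtain ⟨hx, hne, rfl⟩ := h1
        obtain ⟨_, hnt, rfl⟩ := h2
        exact eMap_R.mpr ⟨hx, by simp [hne, hnt], rfl⟩
      · intro hw
        rw [eMap_R] at hw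
        obtain ⟨hx, hmem, hyx⟩ := hw
        have hmem' : x ≠ j ∧ x ∉ t := by
          constructor
          · intro hc; exact hmem (by simp [hc])
          · intro hc; exact hmem (by simp [hc])
        exact ⟨x, vMap_R.mpr ⟨hx, hmem'.1, rfl⟩, eMap_R.mpr ⟨hx, hmem'.2, hyx⟩⟩

/-- e ∘ c⁺ = u_m for m ≥ n-3 -/
theorem e_mul_cplus (m : ℕ) (hm : n - 3 ≤ m) (hmn : m ≤ n - 2) (hn : 4 ≤ n) :
    eMap n (fun x => x ∉ (Finset.Icc (m+1) (n-2)).toList) * uMap n (n-2) = uMap n m := by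
  ext x y
  constructor
  · rintro ⟨z, h1, h2⟩
    rw [eMap_R] at h1
    obtain ⟨hx1, hQ, hzx⟩ := h1
    simp only [Finset.mem_toList, Finset.mem_Icc, not_and, not_le] at hQ
    rw [uMap_R] at h2
    rw [uMap_R]
    omega
  · intro hw
    rw [uMap_R] at hw
    refine ⟨x, eMap_R.mpr ⟨by omega, ?_, rfl⟩, by rw [uMap_R]; omega⟩
    show x ∉ (Finset.Icc (m+1) (n-2)).toList
    simp only [Finset.mem_toList, Finset.mem_Icc, not_and, not_le]
    omega

end Products

section Gen
variable {n : ℕ}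

/-- The generating set (as a predicate). -/
def InG (n : ℕ) (g : PInj n) : Prop :=
  (∃ i, 1 ≤ i ∧ i ≤ n ∧ g = vMap n i) ∨
  (∃ i, (1 ≤ i ∧ i ≤ n - 4 ∨ i = n - 2) ∧ (g = uMap n i ∨ g = (uMap n i).inv))

/-- Products of generators. -/
def GenBy (n : ℕ) (a : PInj n) : Prop :=
  ∃ l : List (PInj n), (∀ b ∈ l, InG n b) ∧ l.prod = a

theorem genBy_mul {a b : PInj n} (ha : GenBy n a) (hb : GenBy n b) : GenBy n (a * b) := by
  obtain ⟨la, h1, h2⟩ := ha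
  obtain ⟨lb, h3, h4⟩ := hb
  refine ⟨la ++ lb, ?_, by rw [List.prod_append, h2, h4]⟩
  intro g hg
  rcases List.mem_append.mp hg with h | h
  exacts [h1 g h, h3 g h]

theorem inG_inv {g : PInj n} (hg : InG n g) : InG n g.inv := by
  rcases hg with ⟨i, h1, h2, rfl⟩ | ⟨i, h1, (rfl | rfl)⟩
  · refine Or.inl ⟨i, h1, h2, ?_⟩
    ext x y
    rw [PInj.inv_R, vMap_R, vMap_R]
    omega
  · exact Or.inr ⟨i, h1, Or.inr rfl⟩
  · exact Or.inr ⟨i, h1, Or.inl (PInj.inv_inv _).symm⟩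

theorem genBy_inv {a : PInj n} (ha : GenBy n a) : GenBy n a.inv := by
  obtain ⟨l, h1, h2⟩ := ha
  refine ⟨l.reverse.map PInj.inv, ?_, by rw [PInj.list_prod_inv, h2]⟩
  intro b hb
  simp only [List.mem_map, List.mem_reverse] at hb
  obtain ⟨c, hc, rfl⟩ := hb
  exact inG_inv (h1 c hc)

theorem genBy_vMap {i : ℕ} (h1 : 1 ≤ i) (h2 : i ≤ n) : GenBy n (vMap n i) := by
  refine ⟨[vMap n i], ?_, by simp⟩
  rintro b hb
  simp only [List.mem_singleton] at hb
  subst hb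
  exact Or.inl ⟨i, h1, h2, rfl⟩

theorem genBy_eMap_list (L : List ℕ) (hL : ∀ j ∈ L, 1 ≤ j ∧ j ≤ n) :
    GenBy n (eMap n (fun x => x ∉ L)) := by
  refine ⟨L.map (vMap n), ?_, v_list_prod L⟩
  intro b hb
  simp only [List.mem_map] at hb
  obtain ⟨j, hj, rfl⟩ := hb
  exact Or.inl ⟨j, (hL j hj).1, (hL j hj).2, rfl⟩

theorem genBy_uMap (hn : 4 ≤ n) {m : ℕ} (h1 : 1 ≤ m) (h2 : m ≤ n - 2) :
    GenBy n (uMap n m) := by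
  rcases le_or_gt m (n - 4) with hm | hm
  · refine ⟨[uMap n m], ?_, by simp⟩
    rintro b hb
    simp only [List.mem_singleton] at hb
    subst hb
    exact Or.inr ⟨m, Or.inl ⟨h1, hm⟩, Or.inl rfl⟩
  · have hcp : GenBy n (uMap n (n-2)) := by
      refine ⟨[uMap n (n-2)], ?_, by simp⟩
      rintro b hb
      simp only [List.mem_singleton] at hb
      subst hb
      exact Or.inr ⟨n-2, Or.inr rfl, Or.inl rfl⟩
    have he : GenBy n (eMap n (fun x => x ∉ (Finset.Icc (m+1) (n-2)).toList)) := by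
      apply genBy_eMap_list
      intro j hj
      simp only [Finset.mem_toList, Finset.mem_Icc] at hj
      omega
    have := genBy_mul he hcp
    rwa [e_mul_cplus m (by omega) h2 hn] at this

theorem genBy_cinv (hn : 4 ≤ n) : GenBy n (uMap n (n-2)).inv := by
  apply genBy_inv
  refine ⟨[uMap n (n-2)], ?_, by simp⟩
  rintro b hb
  simp only [List.mem_singleton] at hb
  subst hb
  exact Or.inr ⟨n-2, Or.inr rfl, Or.inl rfl⟩

theorem genBy_wMap (hn : 4 ≤ n) {m : ℕ} (h1 : 1 ≤ m) (h2 : m ≤ n - 2) :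
    GenBy n (wMap n m) := by
  have := genBy_mul (genBy_uMap hn h1 h2) (genBy_cinv hn)
  rwa [u_mul_cinv m h1 (by omega)] at this

theorem genBy_uinv (hn : 4 ≤ n) {m : ℕ} (h1 : 1 ≤ m) (h2 : m ≤ n - 2) :
    GenBy n (uMap n m).inv := genBy_inv (genBy_uMap hn h1 h2)

theorem genBy_zMap (hn : 4 ≤ n) {P : ℕ} (h1 : 1 ≤ P) (h2 : P ≤ n - 4) :
    GenBy n (zMap n P) := by
  have := genBy_mul (genBy_uMap hn (by omega) (by omega : n - 2 ≤ n - 2))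
    (genBy_uinv hn h1 (by omega))
  rwa [cplus_mul_uinv P h2 hn] at this

theorem genBy_hMap (hn : 4 ≤ n) {P m : ℕ} (hPm : P = 0 ∨ 1 ≤ P ∧ P + 2 ≤ m)
    (h1 : 1 ≤ m) (h2 : m ≤ n - 2) : GenBy n (hMap n P m) := by
  rcases hPm with rfl | ⟨hP1, hP2⟩
  · rw [hMap_zero]; exact genBy_uMap hn h1 h2
  · have := genBy_mul (genBy_wMap hn h1 h2) (genBy_zMap hn hP1 (by omega))
    rwa [w_mul_z P m hP1 hP2 h2 hn] at this

end Gen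

section Split
variable {n : ℕ}

theorem im_restrict {b h : PInj n} (hb : ∀ ⦃x y⦄, b.R x y → ∃ w, h.R w y) :
    b * (h.inv * h) = b := by
  ext x y
  constructor
  · rintro ⟨z, hbz, ⟨w, hw1, hw2⟩⟩
    rw [PInj.inv_R] at hw1
    obtain rfl := h.func hw1 hw2
    exact hbz
  · intro hxy
    obtain ⟨w, hw⟩ := hb hxy
    exact ⟨y, hxy, ⟨w, PInj.inv_R.mpr hw, hw⟩⟩

theorem dom_restrict {b h : PInj n} (hb : ∀ ⦃x y⦄, b.R x y → ∃ w, h.R x w) :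
    (h * h.inv) * b = b := by
  ext x y
  constructor
  · rintro ⟨z, ⟨w, hw1, hw2⟩, hbz⟩
    rw [PInj.inv_R] at hw2
    obtain rfl := h.inj hw2 hw1
    exact hbz
  · intro hxy
    obtain ⟨w, hw⟩ := hb hxy
    exact ⟨x, ⟨w, hw, PInj.inv_R.mpr hw⟩, hxy⟩

/-- Splitting into a non-decreasing and a non-increasing part. -/
theorem split_pos_neg (a : PInj n) (ha : Good a) :
    ∃ p q : PInj n, Good p ∧ Good q ∧ (∀ ⦃x y⦄, p.R x y → x ≤ y) ∧
      (∀ ⦃x y⦄, q.R x y → y ≤ x) ∧ p * q = a := by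
  have hord : ∀ ⦃x y x' y'⦄, a.R x y → a.R x' y' → x < x' → y < y' := by
    intro x y x' y' h h' hlt
    rcases Nat.lt_or_ge x' (x + 2) with h2 | h2
    · have := (ha.2 h h').1 (by omega); omega
    · have := (ha.2 h h').2 h2; omega
  refine ⟨⟨fun x y => ∃ z, a.R x z ∧ y = max x z, ?_, ?_, ?_, ?_⟩, ?_⟩
  · rintro x y ⟨z, hz, rfl⟩; exact a.memL hz
  · rintro x y ⟨z, hz, rfl⟩
    have h1 := a.memL hz
    have h2 := a.memR hz
    simp only [Set.mem_Icc] at *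
    omega
  · rintro x y y' ⟨z, hz, rfl⟩ ⟨z', hz', rfl⟩
    obtain rfl := a.func hz hz'
    rfl
  · rintro x x' y ⟨z, hz, rfl⟩ ⟨z', hz', he⟩
    by_contra hne
    rcases Nat.lt_or_ge x x' with hlt | hge
    · have := hord hz hz' hlt; omega
    · have hlt : x' < x := by omega
      have := hord hz' hz hlt; omega
  · set p : PInj n := ⟨fun x y => ∃ z, a.R x z ∧ y = max x z, _, _, _, _⟩ with hp
    have hpgood : Good p := by
      constructor
      · rintro x y ⟨z, hz, rfl⟩
        have := ha.1 hz
        omega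
      · rintro x y x' y' ⟨z, hz, rfl⟩ ⟨z', hz', rfl⟩
        have r := ha.2 hz hz'
        constructor
        · intro h1; have := r.1 h1; omega
        · intro h2; have := r.2 h2; omega
    refine ⟨p.inv * a, hpgood, good_mul (good_inv hpgood) ha, ?_, ?_, ?_⟩
    · rintro x y ⟨z, hz, rfl⟩; omega
    · rintro y w ⟨x, hx, haw⟩
      rw [PInj.inv_R] at hx
      obtain ⟨z, hz, rfl⟩ := hx
      obtain rfl := a.func hz haw
      omega
    · rw [← mul_assoc]
      apply dom_restrict
      intro x y hxy
      exact ⟨max x y, ⟨y, hxy, rfl⟩⟩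

end Split

section NonnegGen
variable {n : ℕ}

open Classical in
/-- displacement of `a` at `x`. -/
noncomputable def nu (a : PInj n) (x : ℕ) : ℕ :=
  if h : ∃ y, a.R x y then h.choose - x else 0

noncomputable def mu (a : PInj n) : ℕ := ∑ x ∈ Finset.Icc 1 n, nu a x

theorem nu_eq {a : PInj n} {x y : ℕ} (h : a.R x y) : nu a x = y - x := by
  unfold nu
  rw [dif_pos ⟨y, h⟩]
  congr 1
  exact a.func (Exists.choose_spec (⟨y, h⟩ : ∃ y, a.R x y)) h

theorem nu_eq_zero {a : PInj n} {x : ℕ} (h : ¬∃ y, a.R x y) : nu a x = 0 := by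
  unfold nu
  rw [dif_neg h]

theorem gen_partialId (a : PInj n) (hid : ∀ ⦃x y⦄, a.R x y → y = x) : GenBy n a := by
  classical
  set L := ((Finset.Icc 1 n).filter (fun x => ¬∃ y, a.R x y)).toList with hL
  have hLa : eMap n (fun x => x ∉ L) = a := by
    ext x y
    rw [eMap_R]
    constructor
    · rintro ⟨hx, hnl, hyx⟩
      have hx' : x ∈ Finset.Icc 1 n := Finset.mem_Icc.mpr hx
      have : ¬¬∃ y, a.R x y := by
        intro hne
        exact hnl (by simp only [hL, Finset.mem_toList, Finset.mem_filter]; exact ⟨hx', hne⟩)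
      obtain ⟨w, hw⟩ := not_not.mp this
      have := hid hw
      subst this
      subst hyx
      exact hw
    · intro hxy
      have h1 := a.memL hxy
      refine ⟨h1, ?_, hid hxy⟩
      simp only [hL, Finset.mem_toList, Finset.mem_filter, not_and, not_not]
      intro _
      exact ⟨y, hxy⟩
  rw [← hLa]
  apply genBy_eMap_list
  intro j hj
  simp only [hL, Finset.mem_toList, Finset.mem_filter, Finset.mem_Icc] at hj
  exact hj.1

theorem gen_nonneg (hn : 4 ≤ n) :
    ∀ N (a : PInj n), mu a ≤ N → Good a → (∀ ⦃x y⦄, a.R x y → x ≤ y) → GenBy n a := by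
  intro N
  induction N with
  | zero =>
      intro a hmu ha hnn
      apply gen_partialId
      intro x y hxy
      by_contra hne
      have hlt : x < y := by have := hnn hxy; omega
      have hx : x ∈ Finset.Icc 1 n := Finset.mem_Icc.mpr (a.memL hxy)
      have h1 : nu a x ≤ mu a := Finset.single_le_sum (f := nu a) (fun i _ => Nat.zero_le _) hx
      have h2 : nu a x = y - x := nu_eq hxy
      omega
  | succ N ih =>
      intro a hmu ha hnn
      classical
      by_cases hF : ∃ x y, a.R x y ∧ x < y
      case neg =>
        apply gen_partialId
        intro x y hxy
        have h1 := hnn hxy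
        have h2 : ¬ x < y := fun hc => hF ⟨x, y, hxy, hc⟩
        omega
      case pos =>
      -- order-preservation helper
      have hord : ∀ ⦃x y x' y'⦄, a.R x y → a.R x' y' → x < x' → y < y' := by
        intro x y x' y' h h' hlt
        rcases Nat.lt_or_ge x' (x + 2) with h2 | h2
        · have := (ha.2 h h').1 (by omega); omega
        · have := (ha.2 h h').2 h2; omega
      set F : Finset ℕ := (Finset.Icc 1 n).filter (fun x => ∃ y, a.R x y ∧ x < y) with hFdef
      have hFne : F.Nonempty := by
        obtain ⟨x, y, h1, h2⟩ := hF
        exact ⟨x, by simp only [hFdef, Finset.mem_filter]; exact ⟨Finset.mem_Icc.mpr (a.memL h1), y, h1, h2⟩⟩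
      set xt := F.max' hFne with hxtdef
      have hxtF : xt ∈ F := F.max'_mem hFne
      have hxtI : 1 ≤ xt ∧ xt ≤ n := by
        have := (Finset.mem_filter.mp hxtF).1; exact Finset.mem_Icc.mp this
      obtain ⟨yt, hayt, hxtlt⟩ : ∃ y, a.R xt y ∧ xt < y := (Finset.mem_filter.mp hxtF).2
      have hytI : 1 ≤ yt ∧ yt ≤ n := a.memR hayt
      have hyt2 : xt + 2 ≤ yt := by have := ha.1 hayt; omega
      have hmax : ∀ ⦃x y⦄, a.R x y → x < y → x ≤ xt := by
        intro x y h1 h2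
        apply F.le_max' x
        simp only [hFdef, Finset.mem_filter]
        exact ⟨Finset.mem_Icc.mpr (a.memL h1), y, h1, h2⟩
      have hfixgt : ∀ ⦃x y⦄, a.R x y → xt < x → y = x := by
        intro x y h1 h2
        have h3 := hnn h1
        rcases Nat.eq_or_lt_of_le h3 with h4 | h4
        · omega
        · have := hmax h1 h4; omega
      -- the pivot P
      obtain ⟨P, hPlt, hPfix, hPmax⟩ :
          ∃ P, P < xt ∧ (P = 0 ∨ a.R P P) ∧ ∀ z, P < z → z < xt → ¬ a.R z z := by
        set F0 : Finset ℕ := (Finset.Icc 1 n).filter (fun z => z < xt ∧ a.R z z) with hF0def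
        by_cases hF0 : F0.Nonempty
        · refine ⟨F0.max' hF0, ?_, Or.inr ?_, ?_⟩
          · exact ((Finset.mem_filter.mp (F0.max'_mem hF0)).2).1
          · exact ((Finset.mem_filter.mp (F0.max'_mem hF0)).2).2
          · intro z h1 h2 hz
            have : z ∈ F0 := by
              simp only [hF0def, Finset.mem_filter]
              exact ⟨Finset.mem_Icc.mpr (a.memL hz), h2, hz⟩
            have := F0.le_max' z this
            omega
        · refine ⟨0, by omega, Or.inl rfl, ?_⟩
          intro z h1 h2 hz
          refine hF0 ⟨z, ?_⟩
          simp only [hF0def, Finset.mem_filter]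
          exact ⟨Finset.mem_Icc.mpr (a.memL hz), h2, hz⟩
      have hG3 : ∀ ⦃x y⦄, a.R x y → x ≤ P → y ≤ P := by
        intro x y h1 h2
        rcases hPfix with h0 | hPP
        · have := a.memL h1; simp only [Set.mem_Icc] at this; omega
        · rcases Nat.eq_or_lt_of_le h2 with h3 | h3
          · subst h3; have := a.func h1 hPP; omega
          · have := hord h1 hPP h3; omega
      set m := yt - 2 with hmdef
      have hm2 : m + 2 = yt := by omega
      have hm1 : 1 ≤ m := by omega
      have hmn : m ≤ n - 2 := by omega
      have hxtm : xt ≤ m := by omega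
      have hPxt : P = 0 ∨ (1 ≤ P ∧ P + 2 ≤ xt) := by
        rcases hPfix with h0 | hPP
        · exact Or.inl h0
        · right
          have hPI := a.memL hPP
          simp only [Set.mem_Icc] at hPI
          refine ⟨hPI.1, ?_⟩
          by_contra hc
          have hx1 : xt = P + 1 := by omega
          have := (ha.2 hPP hayt).1 hx1
          omega
      -- x fixed implies x ≤ P or x > xt
      have hfixP : ∀ ⦃x⦄, a.R x x → x ≤ P ∨ xt < x := by
        intro x hx
        by_contra hc
        push_neg at hc
        rcases Nat.lt_or_ge x xt with h1 | h1
        · exact hPmax x (by omega) h1 hx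
        · have : x = xt := by omega
          subst this
          have := a.func hx hayt
          omega
      -- points above xt
      have hgt2 : ∀ ⦃x y⦄, a.R x y → xt < x → xt + 2 ≤ x ∧ yt + 2 ≤ y := by
        intro x y h1 h2
        have hyx := hfixgt h1 h2
        have hx2 : xt + 2 ≤ x := by
          by_contra hc
          have hx1 : x = xt + 1 := by omega
          have := (ha.2 hayt h1).1 hx1
          omega
        have := (ha.2 hayt h1).2 hx2
        omega
      set h : PInj n := hMap n P m with hhdef
      have hhR : ∀ {x y : ℕ}, h.R x y ↔ (1 ≤ x ∧ x ≤ n) ∧ (1 ≤ y ∧ y ≤ n) ∧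
          ((x ≤ P ∧ y = x) ∨ ((P = 0 ∨ P + 2 ≤ x) ∧ x ≤ m ∧ y = x + 2) ∨ (m + 4 ≤ x ∧ y = x)) :=
        hMap_R
      -- key middle-position facts
      have hmid : ∀ ⦃x y⦄, a.R x y → P < x → x ≤ xt → (x + 2 ≤ y ∧ y ≤ yt ∧ (P = 0 ∨ P + 2 ≤ x)) := by
        intro x y hxy h1 h2
        have hxy2 : x + 2 ≤ y := by
          have hnn1 := hnn hxy
          have hpar := ha.1 hxy
          rcases Nat.eq_or_lt_of_le hnn1 with h3 | h3
          · exfalso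
            have hfix : a.R x x := by rwa [← h3] at hxy
            rcases hfixP hfix with h4 | h4 <;> omega
          · omega
        have hyyt : y ≤ yt := by
          rcases Nat.eq_or_lt_of_le h2 with h3 | h3
          · subst h3; have := a.func hxy hayt; omega
          · have := hord hxy hayt h3; omega
        have hguard : P = 0 ∨ P + 2 ≤ x := by
          rcases hPfix with h0 | hPP
          · exact Or.inl h0
          · right
            by_contra hc
            have hx1 : x = P + 1 := by omega
            have := (ha.2 hPP hxy).1 hx1
            omega
        exact ⟨hxy2, hyyt, hguard⟩
      have him : ∀ ⦃x y⦄, a.R x y → ∃ w, h.R w y := by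
        intro x y hxy
        have hxI := a.memL hxy
        have hyI := a.memR hxy
        simp only [Set.mem_Icc] at hxI hyI
        rcases le_or_gt x P with hxP | hxP
        · have hyP : y ≤ P := hG3 hxy hxP
          exact ⟨y, hhR.mpr ⟨hyI, hyI, Or.inl ⟨hyP, rfl⟩⟩⟩
        · rcases le_or_gt x xt with hxxt | hxxt
          · obtain ⟨h1, h2, h3⟩ := hmid hxy hxP hxxt
            refine ⟨y - 2, hhR.mpr ⟨⟨by omega, by omega⟩, hyI, Or.inr (Or.inl ⟨?_, by omega, by omega⟩)⟩⟩
            rcases h3 with h0 | h4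
            · exact Or.inl h0
            · right; omega
          · obtain ⟨h1, h2⟩ := hgt2 hxy hxxt
            have hyx := hfixgt hxy hxxt
            exact ⟨y, hhR.mpr ⟨hyI, hyI, Or.inr (Or.inr ⟨by omega, rfl⟩)⟩⟩
      have heq : (a * h.inv) * h = a := by
        rw [mul_assoc]
        exact im_restrict him
      set a' := a * h.inv with ha'def
      have hGoodh : Good h := good_hMap n P m
      have hGooda' : Good a' := good_mul ha (good_inv hGoodh)
      have hchar : ∀ ⦃x y⦄, a'.R x y → ∃ w, a.R x w ∧ h.R y w := fun x y hp => hp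
      -- a' is non-decreasing
      have hnn' : ∀ ⦃x y⦄, a'.R x y → x ≤ y := by
        intro x y hp
        obtain ⟨w, haw, hhw⟩ := hchar hp
        have hxw := hnn haw
        rcases hhR.mp hhw with ⟨hy1, hw1, (⟨hb1, hb2⟩ | ⟨hg, hb1, hb2⟩ | ⟨hb1, hb2⟩)⟩
        · omega
        · -- w = y + 2 : show x + 2 ≤ w
          have hx2w : x + 2 ≤ w := by
            by_contra hc
            have hpar := ha.1 haw
            have hwx : w = x := by omega
            have hfix : a.R x x := by rwa [hwx] at haw
            rcases hfixP hfix with h4 | h4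
            · have := hG3 haw h4
              rcases hg with h0 | h0 <;> omega
            · obtain ⟨hh1, hh2⟩ := hgt2 haw h4
              omega
          omega
        · omega
      -- mu decreases
      have hle : ∀ x, nu a' x ≤ nu a x := by
        intro x
        by_cases hd : ∃ y, a'.R x y
        · obtain ⟨y', hy'⟩ := hd
          obtain ⟨w, haw, hhw⟩ := hchar hy'
          have h1 : nu a' x = y' - x := nu_eq hy'
          have h2 : nu a x = w - x := nu_eq haw
          rcases hhR.mp hhw with ⟨_, _, (⟨_, hb⟩ | ⟨_, _, hb⟩ | ⟨_, hb⟩)⟩ <;> omega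
        · rw [nu_eq_zero hd]; exact Nat.zero_le _
      have hlt : nu a' xt < nu a xt := by
        have h0 : (a' * h).R xt yt := by rw [heq]; exact hayt
        obtain ⟨z, hz, hhz⟩ := h0
        have h1 : nu a' xt = z - xt := nu_eq hz
        have h2 : nu a xt = yt - xt := nu_eq hayt
        rcases hhR.mp hhz with ⟨hz1, hz2, (⟨hb1, hb2⟩ | ⟨hg, hb1, hb2⟩ | ⟨hb1, hb2⟩)⟩ <;> omega
      have hmulet : mu a' < mu a := by
        apply Finset.sum_lt_sum (fun i _ => hle i)
        exact ⟨xt, Finset.mem_Icc.mpr hxtI, hlt⟩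
      have hmu' : mu a' ≤ N := by omega
      have hga' : GenBy n a' := ih a' hmu' hGooda' hnn'
      have hgh : GenBy n h := by
        apply genBy_hMap hn ?_ hm1 hmn
        rcases hPxt with h0 | h0
        · exact Or.inl h0
        · exact Or.inr ⟨by omega, by omega⟩
      have := genBy_mul hga' hgh
      rwa [heq] at this

end NonnegGen

section Upper
variable {n : ℕ}

theorem genBy_of_good (hn : 4 ≤ n) (a : PInj n) (ha : Good a) : GenBy n a := by
  obtain ⟨p, q, hp, hq, hpnn, hqnp, hpq⟩ := split_pos_neg a ha
  have hgp : GenBy n p := gen_nonneg hn (mu p) p le_rfl hp hpnn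
  have hqi : Good q.inv := good_inv hq
  have hqinn : ∀ ⦃x y⦄, q.inv.R x y → x ≤ y := by
    intro x y hxy
    rw [PInj.inv_R] at hxy
    exact hqnp hxy
  have hgq : GenBy n q := by
    have := genBy_inv (gen_nonneg hn (mu q.inv) q.inv le_rfl hqi hqinn)
    rwa [PInj.inv_inv] at this
  rw [← hpq]
  exact genBy_mul hgp hgq

theorem isIOF_of_inG {g : PInj n} (hg : InG n g) : IsIOF g := by
  rw [good_iff]
  rcases hg with ⟨i, _, _, rfl⟩ | ⟨i, _, (rfl | rfl)⟩
  · exact good_vMap n i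
  · exact good_uMap n i
  · exact good_inv (good_uMap n i)

open Classical in
/-- The generating Finset. -/
noncomputable def Gfin (n : ℕ) : Finset (PInj n) :=
  ((Finset.Icc 1 n).image (vMap n)) ∪
  ((Finset.Icc 1 (n-4) ∪ {n-2}).image (uMap n)) ∪
  ((Finset.Icc 1 (n-4) ∪ {n-2}).image (fun i => (uMap n i).inv))

theorem mem_Gfin {g : PInj n} (hn : 4 ≤ n) : g ∈ Gfin n ↔ InG n g := by
  classical
  unfold Gfin
  simp only [Finset.mem_union, Finset.mem_image, Finset.mem_Icc, Finset.mem_singleton]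
  constructor
  · rintro ((⟨i, hi, rfl⟩ | ⟨i, hi, rfl⟩) | ⟨i, hi, rfl⟩)
    · exact Or.inl ⟨i, hi.1, hi.2, rfl⟩
    · rcases hi with hi | rfl
      · exact Or.inr ⟨i, Or.inl hi, Or.inl rfl⟩
      · exact Or.inr ⟨n-2, Or.inr rfl, Or.inl rfl⟩
    · rcases hi with hi | rfl
      · exact Or.inr ⟨i, Or.inl hi, Or.inr rfl⟩
      · exact Or.inr ⟨n-2, Or.inr rfl, Or.inr rfl⟩
  · rintro (⟨i, h1, h2, rfl⟩ | ⟨i, h1, (rfl | rfl)⟩)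
    · exact Or.inl (Or.inl ⟨i, ⟨h1, h2⟩, rfl⟩)
    · rcases h1 with h1 | rfl
      · exact Or.inl (Or.inr ⟨i, Or.inl h1, rfl⟩)
      · exact Or.inl (Or.inr ⟨n-2, Or.inr rfl, rfl⟩)
    · rcases h1 with h1 | rfl
      · exact Or.inr ⟨i, Or.inl h1, rfl⟩
      · exact Or.inr ⟨n-2, Or.inr rfl, rfl⟩

theorem Gfin_generates (hn : 4 ≤ n) : Generates n ((Gfin n : Finset (PInj n)) : Set (PInj n)) := by
  constructor
  · intro g hg
    rw [Finset.mem_coe, mem_Gfin hn] at hg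
    exact isIOF_of_inG hg
  · intro a ha
    obtain ⟨l, h1, h2⟩ := genBy_of_good hn a ((good_iff a).mp ha)
    refine ⟨l, ?_, h2⟩
    intro b hb
    rw [Finset.mem_coe, mem_Gfin hn]
    exact h1 b hb

theorem Gfin_card (hn : 4 ≤ n) : (Gfin n).card = 3 * n - 6 := by
  classical
  have hI : (Finset.Icc 1 (n-4) ∪ ({n-2} : Finset ℕ)).card = n - 3 := by
    rw [Finset.card_union_of_disjoint]
    · rw [Nat.card_Icc, Finset.card_singleton]; omega
    · rw [Finset.disjoint_singleton_right, Finset.mem_Icc]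
      omega
  have hIcc : ∀ i ∈ Finset.Icc 1 (n-4) ∪ ({n-2} : Finset ℕ), 1 ≤ i ∧ i ≤ n - 2 := by
    intro i hi
    simp only [Finset.mem_union, Finset.mem_Icc, Finset.mem_singleton] at hi
    omega
  have hucard : ((Finset.Icc 1 (n-4) ∪ {n-2}).image (uMap n)).card = n - 3 := by
    rw [Finset.card_image_of_injOn, hI]
    intro i hi j hj hij
    by_contra hne
    rcases Nat.lt_or_ge i j with h | h
    · exact u_ne_u h (hIcc j (Finset.mem_coe.mp hj)).2 hn hij
    · exact u_ne_u (by omega) (hIcc i (Finset.mem_coe.mp hi)).2 hn hij.symm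
  have huicard : ((Finset.Icc 1 (n-4) ∪ {n-2}).image (fun i => (uMap n i).inv)).card = n - 3 := by
    rw [Finset.card_image_of_injOn, hI]
    intro i hi j hj hij
    by_contra hne
    have hij' : uMap n i = uMap n j := PInj.inv_injective hij
    rcases Nat.lt_or_ge i j with h | h
    · exact u_ne_u h (hIcc j (Finset.mem_coe.mp hj)).2 hn hij'
    · exact u_ne_u (by omega) (hIcc i (Finset.mem_coe.mp hi)).2 hn hij'.symm
  have hvcard : ((Finset.Icc 1 n).image (vMap n)).card = n := by
    rw [Finset.card_image_of_injOn, Nat.card_Icc]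
    · omega
    · intro i hi j hj hij
      by_contra hne
      have hi' := Finset.mem_Icc.mp (Finset.mem_coe.mp hi)
      exact v_ne_v hi'.1 hi'.2 hne hij
  have hd1 : Disjoint ((Finset.Icc 1 n).image (vMap n))
      ((Finset.Icc 1 (n-4) ∪ {n-2}).image (uMap n)) := by
    rw [Finset.disjoint_left]
    rintro g hg hg'
    simp only [Finset.mem_image] at hg hg'
    obtain ⟨i, hi, rfl⟩ := hg
    obtain ⟨j, hj, hj2⟩ := hg'
    exact v_ne_u (hIcc j hj).1 hn hj2.symm
  have hd2 : Disjoint (((Finset.Icc 1 n).image (vMap n)) ∪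
      ((Finset.Icc 1 (n-4) ∪ {n-2}).image (uMap n)))
      ((Finset.Icc 1 (n-4) ∪ {n-2}).image (fun i => (uMap n i).inv)) := by
    rw [Finset.disjoint_left]
    rintro g hg hg'
    simp only [Finset.mem_union, Finset.mem_image] at hg hg'
    obtain ⟨j, hj, hj2⟩ := hg'
    rcases hg with ⟨i, hi, rfl⟩ | ⟨i, hi, rfl⟩
    · exact v_ne_uinv (hIcc j (Finset.mem_union.mpr hj)).1 hn hj2.symm
    · exact u_ne_uinv (hIcc i (Finset.mem_union.mpr hi)).1 hn hj2.symm
  unfold Gfin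
  rw [Finset.card_union_of_disjoint hd2, Finset.card_union_of_disjoint hd1,
    hvcard, hucard, huicard]
  omega

end Upper

section Walk
variable {n : ℕ}

/-- Shifts are non-decreasing when there are no 3 consecutive missing points. -/
theorem shift_mono {a : PInj n} (ha : Good a) :
    ∀ k x y x' y', x' - x ≤ k → a.R x y → a.R x' y' → x < x' →
    (∀ z, x < z → z + 3 ≤ x' →
      (∃ w, a.R z w) ∨ (∃ w, a.R (z+1) w) ∨ (∃ w, a.R (z+2) w)) →
    y + x' ≤ x + y' := by
  intro k
  induction k with
  | zero => intro x y x' y' hk _ _ hlt _; omega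
  | succ k ih =>
      intro x y x' y' hk hxy hxy' hlt hgap
      rcases le_or_gt x' (x + 3) with hsmall | hbig
      · -- direct cases
        have hpar := ha.1 hxy
        have hpar' := ha.1 hxy'
        have h3 : x' = x + 1 ∨ x' = x + 2 ∨ x' = x + 3 := by omega
        rcases h3 with h3 | h3 | h3
        · have := (ha.2 hxy hxy').1 h3; omega
        · have := (ha.2 hxy hxy').2 (by omega); omega
        · have := (ha.2 hxy hxy').2 (by omega); omega
      · -- find a domain point in (x, x+3]
        have hz := hgap (x+1) (by omega) (by omega)
        have hz' : ∃ z₀ w₀, a.R z₀ w₀ ∧ x < z₀ ∧ z₀ ≤ x + 3 := by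
          rcases hz with ⟨w, hw⟩ | ⟨w, hw⟩ | ⟨w, hw⟩
          · exact ⟨x+1, w, hw, by omega, by omega⟩
          · exact ⟨x+2, w, hw, by omega, by omega⟩
          · exact ⟨x+3, w, hw, by omega, by omega⟩
        obtain ⟨z₀, w₀, hzw, hz1, hz2⟩ := hz'
        have step1 : y + z₀ ≤ x + w₀ := by
          apply ih x y z₀ w₀ (by omega) hxy hzw (by omega)
          intro z hc1 hc2
          omega
        have step2 : w₀ + x' ≤ z₀ + y' := by
          apply ih z₀ w₀ x' y' (by omega) hzw hxy' (by omega)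
          intro z hc1 hc2
          exact hgap z (by omega) hc2
        omega

/-- Along a fully-present interval the shift is constant. -/
theorem shift_eq {a : PInj n} (ha : Good a) :
    ∀ k x y x', x' - x ≤ k → a.R x y → x ≤ x' →
    (∀ z, x ≤ z → z ≤ x' → ∃ w, a.R z w) →
    ∃ y', a.R x' y' ∧ y' + x = y + x' := by
  intro k
  induction k with
  | zero =>
      intro x y x' hk hxy hle hdom
      have : x' = x := by omega
      subst this
      exact ⟨y, hxy, by omega⟩
  | succ k ih =>
      intro x y x' hk hxy hle hdom
      rcases Nat.eq_or_lt_of_le hle with heq | hlt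
      · subst heq; exact ⟨y, hxy, by omega⟩
      · obtain ⟨w, hw⟩ := hdom (x+1) (by omega) (by omega)
        have hw1 : w = y + 1 := (ha.2 hxy hw).1 rfl
        subst hw1
        obtain ⟨y', h1, h2⟩ := ih (x+1) (y+1) x' (by omega) hw (by omega)
          (fun z hz1 hz2 => hdom z (by omega) hz2)
        exact ⟨y', h1, by omega⟩

/-- A shift decrease can be localized to a consecutive pair of domain points. -/
theorem exists_desc {a : PInj n} (ha : Good a) :
    ∀ k p q p' q', p' - p ≤ k → a.R p q → a.R p' q' → p < p' → q + p' > p + q' →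
    ∃ c d c' d', a.R c d ∧ a.R c' d' ∧ p ≤ c ∧ c < c' ∧ c' ≤ p' ∧ d + c' > c + d' ∧
      (∀ z, c < z → z < c' → ¬∃ w, a.R z w) := by
  intro k
  induction k with
  | zero => intro p q p' q' hk _ _ hlt _; omega
  | succ k ih =>
      intro p q p' q' hk hp hp' hlt hdec
      by_cases hmid : ∃ z w, p < z ∧ z < p' ∧ a.R z w
      · obtain ⟨z, w, h1, h2, hzw⟩ := hmid
        rcases le_or_gt (q + z) (p + w) with hcase | hcase
        · -- decrease on the right part
          obtain ⟨c, d, c', d', r1, r2, r3, r4, r5, r6, r7⟩ :=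
            ih z w p' q' (by omega) hzw hp' h2 (by omega)
          exact ⟨c, d, c', d', r1, r2, by omega, r4, r5, r6, r7⟩
        · -- decrease on the left part
          obtain ⟨c, d, c', d', r1, r2, r3, r4, r5, r6, r7⟩ :=
            ih p q z w (by omega) hp hzw h1 (by omega)
          exact ⟨c, d, c', d', r1, r2, r3, r4, by omega, r6, r7⟩
      · push_neg at hmid
        exact ⟨p, q, p', q', hp, hp', le_rfl, hlt, le_rfl, hdec,
          fun z h1 h2 ⟨w, hw⟩ => hmid z w h1 h2 hw⟩

end Walk

section Classify
variable {n : ℕ}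

theorem partialId_of_large (hn : 4 ≤ n) {a : PInj n} (ha : Good a)
    (hdom : ∀ z z', 1 ≤ z → z < z' → z' ≤ n →
      (¬∃ w, a.R z w) → (¬∃ w, a.R z' w) → False) :
    IsPartialId a := by
  intro x y hxy
  by_contra hne
  have hxI := a.memL hxy
  have hyI := a.memR hxy
  simp only [Set.mem_Icc] at hxI hyI
  have hpar := ha.1 hxy
  rcases Nat.lt_or_ge x y with hlt | hge
  · -- increasing pair
    have hy2 : x + 2 ≤ y := by omega
    have ht : (∃ w, a.R (n-1) w) ∨ (∃ w, a.R n w) := by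
      by_contra hc
      push_neg at hc
      exact hdom (n-1) n (by omega) (by omega) le_rfl (not_exists.mpr hc.1) (not_exists.mpr hc.2)
    obtain ⟨t, w, htw, ht1, ht2⟩ : ∃ t w, a.R t w ∧ n - 1 ≤ t ∧ t ≤ n := by
      rcases ht with ⟨w, hw⟩ | ⟨w, hw⟩
      · exact ⟨n-1, w, hw, le_rfl, by omega⟩
      · exact ⟨n, w, hw, by omega, le_rfl⟩
    have hwI := a.memR htw
    simp only [Set.mem_Icc] at hwI
    rcases Nat.lt_or_ge x t with hxt | hxt
    · have hmono := shift_mono ha (t - x) x y t w le_rfl hxy htw hxt ?_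
      · omega
      · intro z hz1 hz2
        by_contra hc
        push_neg at hc
        exact hdom z (z+1) (by omega) (by omega) (by omega) (not_exists.mpr hc.1) (not_exists.mpr hc.2.1)
    · omega
  · have hlt : y < x := by omega
    have hy2 : y + 2 ≤ x := by omega
    have ht : (∃ w, a.R 1 w) ∨ (∃ w, a.R 2 w) := by
      by_contra hc
      push_neg at hc
      exact hdom 1 2 le_rfl (by omega) (by omega) (not_exists.mpr hc.1) (not_exists.mpr hc.2)
    obtain ⟨t, w, htw, ht1, ht2⟩ : ∃ t w, a.R t w ∧ 1 ≤ t ∧ t ≤ 2 := by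
      rcases ht with ⟨w, hw⟩ | ⟨w, hw⟩
      · exact ⟨1, w, hw, le_rfl, by omega⟩
      · exact ⟨2, w, hw, by omega, le_rfl⟩
    have hwI := a.memR htw
    simp only [Set.mem_Icc] at hwI
    rcases Nat.lt_or_ge t x with hxt | hxt
    · have hmono := shift_mono ha (x - t) t w x y le_rfl htw hxy hxt ?_
      · omega
      · intro z hz1 hz2
        by_contra hc
        push_neg at hc
        exact hdom z (z+1) (by omega) (by omega) (by omega) (not_exists.mpr hc.1) (not_exists.mpr hc.2.1)
    · omega

theorem eq_cplus (hn : 4 ≤ n) {a : PInj n} (ha : Good a) {x0 y0 : ℕ}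
    (hup : a.R x0 y0) (hlt0 : x0 < y0)
    (hdom : ∀ z1 z2 z3, 1 ≤ z1 → z1 < z2 → z2 < z3 → z3 ≤ n →
      (¬∃ w, a.R z1 w) → (¬∃ w, a.R z2 w) → (¬∃ w, a.R z3 w) → False) :
    a = uMap n (n-2) := by
  have hx0I := a.memL hup
  have hy0I := a.memR hup
  simp only [Set.mem_Icc] at hx0I hy0I
  have hpar0 := ha.1 hup
  have hy02 : x0 + 2 ≤ y0 := by omega
  have hx0n : x0 ≤ n - 2 := by omega
  have hwin : ∀ z, 1 ≤ z → z + 2 ≤ n →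
      (∃ w, a.R z w) ∨ (∃ w, a.R (z+1) w) ∨ (∃ w, a.R (z+2) w) := by
    intro z h1 h2
    by_contra hc
    push_neg at hc
    exact hdom z (z+1) (z+2) h1 (by omega) (by omega) (by omega) (not_exists.mpr hc.1) (not_exists.mpr hc.2.1) (not_exists.mpr hc.2.2)
  have hnotop : ∀ t w, a.R t w → t ≤ n - 2 := by
    intro t w htw
    by_contra hc
    have htI := a.memL htw
    have hwI := a.memR htw
    simp only [Set.mem_Icc] at htI hwI
    have hxt : x0 < t := by omega
    have hmono := shift_mono ha (t - x0) x0 y0 t w le_rfl hup htw hxt ?_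
    · omega
    · intro z hz1 hz2
      exact hwin z (by omega) (by omega)
  have hall : ∀ z, 1 ≤ z → z ≤ n - 2 → ∃ w, a.R z w := by
    intro z h1 h2
    by_contra hc
    have hm1 : ¬∃ w, a.R (n-1) w := by
      rintro ⟨w, hw⟩
      have := hnotop _ _ hw
      omega
    have hm2 : ¬∃ w, a.R n w := by
      rintro ⟨w, hw⟩
      have := hnotop _ _ hw
      omega
    exact hdom z (n-1) n h1 (by omega) (by omega) le_rfl hc hm1 hm2
  obtain ⟨w1, hw1⟩ := hall 1 le_rfl (by omega)
  obtain ⟨y0', hy0', hcross0⟩ := shift_eq ha (x0 - 1) 1 w1 x0 le_rfl hw1 hx0I.1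
    (fun z hz1 hz2 => hall z hz1 (by omega))
  have heq0 : y0' = y0 := a.func hy0' hup
  obtain ⟨wn, hwn, hcrossn⟩ := shift_eq ha (n - 3) 1 w1 (n-2) (by omega) hw1 (by omega)
    (fun z hz1 hz2 => hall z hz1 hz2)
  have hwnI := a.memR hwn
  simp only [Set.mem_Icc] at hwnI
  have hw13 : w1 = 3 := by omega
  ext x y
  rw [uMap_R]
  constructor
  · intro hxy
    have hxb := a.memL hxy
    have hyb := a.memR hxy
    simp only [Set.mem_Icc] at hxb hyb
    have hx2 : x ≤ n - 2 := hnotop _ _ hxy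
    obtain ⟨y', h5, h6⟩ := shift_eq ha (x - 1) 1 w1 x le_rfl hw1 hxb.1
      (fun z hz1 hz2 => hall z hz1 (by omega))
    have h7 := a.func h5 hxy
    exact ⟨hxb, hyb, Or.inl ⟨hx2, by omega⟩⟩
  · rintro ⟨hxb, hyb, (⟨hx2, hy2⟩ | ⟨hx2, hy2⟩)⟩
    · obtain ⟨y', h5, h6⟩ := shift_eq ha (x - 1) 1 w1 x le_rfl hw1 hxb.1
        (fun z hz1 hz2 => hall z hz1 (by omega))
      have : y' = y := by omega
      rwa [this] at h5
    · omega

theorem eq_u_or_w (hn : 4 ≤ n) {g : PInj n} (hg : Good g) {p q p' q' : ℕ}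
    (hp : g.R p q) (hp' : g.R p' q') (hlt : p < p') (hdec : q + p' > p + q')
    (hdom : ∀ z1 z2 z3 z4, 1 ≤ z1 → z1 < z2 → z2 < z3 → z3 < z4 → z4 ≤ n →
      (¬∃ w, g.R z1 w) → (¬∃ w, g.R z2 w) → (¬∃ w, g.R z3 w) → (¬∃ w, g.R z4 w) → False) :
    ∃ m, 1 ≤ m ∧ m ≤ n - 4 ∧ p ≤ m ∧ m + 4 ≤ p' ∧ (g = uMap n m ∨ g = wMap n m) := by
  obtain ⟨c, d, c', d', hc, hc', r3, r4, r5, r6, r7⟩ :=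
    exists_desc hg (p' - p) p q p' q' le_rfl hp hp' hlt hdec
  have hcI := g.memL hc
  have hdI := g.memR hc
  have hcI' := g.memL hc'
  have hdI' := g.memR hc'
  simp only [Set.mem_Icc] at hcI hdI hcI' hdI'
  have hpar := hg.1 hc
  have hpar' := hg.1 hc'
  have h4 : c + 4 ≤ c' := by
    by_contra hcon
    have h3 : c' = c + 1 ∨ c' = c + 2 ∨ c' = c + 3 := by omega
    rcases h3 with h3 | h3 | h3
    · have := (hg.2 hc hc').1 h3; omega
    · have := (hg.2 hc hc').2 (by omega); omega
    · have := (hg.2 hc hc').2 (by omega); omega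
  have h44 : c' = c + 4 := by
    by_contra hcon
    exact hdom (c+1) (c+2) (c+3) (c+4) (by omega) (by omega) (by omega) (by omega) (by omega)
      (r7 _ (by omega) (by omega)) (r7 _ (by omega) (by omega))
      (r7 _ (by omega) (by omega)) (r7 _ (by omega) (by omega))
  have hgap2 : d + 2 ≤ d' := (hg.2 hc hc').2 (by omega)
  have hall : ∀ z, 1 ≤ z → z ≤ n → z ≠ c+1 → z ≠ c+2 → z ≠ c+3 → ∃ w, g.R z w := by
    intro z h1 h2 e1 e2 e3
    by_contra hcz
    rcases Nat.lt_or_ge z (c+1) with hlo | hhi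
    · exact hdom z (c+1) (c+2) (c+3) h1 (by omega) (by omega) (by omega) (by omega)
        hcz (r7 _ (by omega) (by omega)) (r7 _ (by omega) (by omega)) (r7 _ (by omega) (by omega))
    · exact hdom (c+1) (c+2) (c+3) z (by omega) (by omega) (by omega) (by omega) h2
        (r7 _ (by omega) (by omega)) (r7 _ (by omega) (by omega)) (r7 _ (by omega) (by omega)) hcz
  have hleft : ∀ z, 1 ≤ z → z ≤ c → ∃ w, g.R z w ∧ w + c = d + z := by
    intro z h1 h2
    obtain ⟨w, hw⟩ := hall z h1 (by omega) (by omega) (by omega) (by omega)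
    obtain ⟨d2, hd2, hcr⟩ := shift_eq hg (c - z) z w c le_rfl hw h2
      (fun u hu1 hu2 => hall u (by omega) (by omega) (by omega) (by omega) (by omega))
    have := g.func hd2 hc
    exact ⟨w, hw, by omega⟩
  have hright : ∀ z, c' ≤ z → z ≤ n → ∃ w, g.R z w ∧ w + c' = d' + z := by
    intro z h1 h2
    obtain ⟨d2, hd2, hcr⟩ := shift_eq hg (z - c') c' d' z le_rfl hc' h1
      (fun u hu1 hu2 => hall u (by omega) (by omega) (by omega) (by omega) (by omega))
    exact ⟨d2, hd2, by omega⟩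
  obtain ⟨w1, hw1, hx1⟩ := hleft 1 le_rfl hcI.1
  have hw1b := g.memR hw1
  simp only [Set.mem_Icc] at hw1b
  obtain ⟨wn, hwn, hxn⟩ := hright n hcI'.2 le_rfl
  have hwnb := g.memR hwn
  simp only [Set.mem_Icc] at hwnb
  have hDD : (d = c + 2 ∧ d' = c') ∨ (d = c ∧ d' + 2 = c') := by omega
  refine ⟨c, hcI.1, by omega, r3, by omega, ?_⟩
  rcases hDD with ⟨hD1, hD2⟩ | ⟨hD1, hD2⟩
  · left
    ext x y
    rw [uMap_R]
    constructor
    · intro hxy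
      have hxb := g.memL hxy
      have hyb := g.memR hxy
      simp only [Set.mem_Icc] at hxb hyb
      rcases Nat.lt_or_ge c x with hcx | hcx
      · rcases Nat.lt_or_ge x c' with hxc' | hxc'
        · exact absurd ⟨y, hxy⟩ (r7 x hcx hxc')
        · obtain ⟨w, hw, hcr⟩ := hright x hxc' hxb.2
          have := g.func hw hxy
          exact ⟨hxb, hyb, Or.inr ⟨by omega, by omega⟩⟩
      · obtain ⟨w, hw, hcr⟩ := hleft x hxb.1 hcx
        have := g.func hw hxy
        exact ⟨hxb, hyb, Or.inl ⟨hcx, by omega⟩⟩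
    · rintro ⟨hxb, hyb, (⟨hx2, hy2⟩ | ⟨hx2, hy2⟩)⟩
      · obtain ⟨w, hw, hcr⟩ := hleft x hxb.1 hx2
        have : w = y := by omega
        rwa [this] at hw
      · obtain ⟨w, hw, hcr⟩ := hright x (by omega) hxb.2
        have : w = y := by omega
        rwa [this] at hw
  · right
    ext x y
    rw [wMap_R]
    constructor
    · intro hxy
      have hxb := g.memL hxy
      have hyb := g.memR hxy
      simp only [Set.mem_Icc] at hxb hyb
      rcases Nat.lt_or_ge c x with hcx | hcx
      · rcases Nat.lt_or_ge x c' with hxc' | hxc'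
        · exact absurd ⟨y, hxy⟩ (r7 x hcx hxc')
        · obtain ⟨w, hw, hcr⟩ := hright x hxc' hxb.2
          have := g.func hw hxy
          exact ⟨hxb, hyb, Or.inr ⟨by omega, by omega⟩⟩
      · obtain ⟨w, hw, hcr⟩ := hleft x hxb.1 hcx
        have := g.func hw hxy
        exact ⟨hxb, hyb, Or.inl ⟨hcx, by omega⟩⟩
    · rintro ⟨hxb, hyb, (⟨hx2, hy2⟩ | ⟨hx2, hy2⟩)⟩
      · obtain ⟨w, hw, hcr⟩ := hleft x hxb.1 hx2
        have : w = y := by omega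
        rwa [this] at hw
      · obtain ⟨w, hw, hcr⟩ := hright x (by omega) hxb.2
        have : w = y := by omega
        rwa [this] at hw

end Classify

section Traj
variable {n : ℕ}

theorem good_order {a : PInj n} (ha : Good a) :
    ∀ ⦃x y x' y'⦄, a.R x y → a.R x' y' → x < x' → y < y' := by
  intro x y x' y' h h' hlt
  rcases Nat.lt_or_ge x' (x + 2) with h2 | h2
  · have := (ha.2 h h').1 (by omega); omega
  · have := (ha.2 h h').2 h2; omega

theorem prod_middle {l1 l2 : List (PInj n)} {g : PInj n} {x y : ℕ}
    (h : ((l1 ++ g :: l2).prod).R x y) :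
    ∃ r s, l1.prod.R x r ∧ g.R r s ∧ l2.prod.R s y := by
  rw [List.prod_append, List.prod_cons] at h
  obtain ⟨r, h1, h2⟩ := h
  obtain ⟨s, h3, h4⟩ := h2
  exact ⟨r, s, h1, h3, h4⟩

/-- Locate a step at which the gap between two tracked tokens decreases. -/
theorem traj_dec (l : List (PInj n)) (hl : ∀ g ∈ l, Good g) :
    ∀ x x' y y', l.prod.R x y → l.prod.R x' y' → x < x' → y + x' > x + y' →
    ∃ l1 g l2, l = l1 ++ g :: l2 ∧ ∃ s s' u u', l1.prod.R x s ∧ l1.prod.R x' s' ∧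
      g.R s u ∧ g.R s' u' ∧ s < s' ∧ u + s' > s + u' := by
  induction l with
  | nil =>
      intro x x' y y' h h' hlt hdec
      obtain ⟨_, rfl⟩ := h
      obtain ⟨_, rfl⟩ := h'
      omega
  | cons g t ih =>
      intro x x' y y' h h' hlt hdec
      obtain ⟨p, hgp, htp⟩ := h
      obtain ⟨p', hgp', htp'⟩ := h'
      have hg : Good g := hl g (by simp)
      have hpp : p < p' := good_order hg hgp hgp' hlt
      rcases Nat.lt_or_ge (x + p') (p + x') with hcase | hcase
      · -- decrease already at g
        refine ⟨[], g, t, rfl, x, x', p, p', ?_, ?_, hgp, hgp', hlt, by omega⟩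
        · exact ⟨g.memL hgp, rfl⟩
        · exact ⟨g.memL hgp', rfl⟩
      · -- decrease later
        obtain ⟨l1, g', l2, rfl, s, s', u, u', m1, m2, m3, m4, m5, m6⟩ :=
          ih (fun b hb => hl b (by simp [hb])) p p' y y' htp htp' hpp (by omega)
        refine ⟨g :: l1, g', l2, rfl, s, s', u, u', ⟨p, hgp, m1⟩, ⟨p', hgp', m2⟩,
          m3, m4, m5, m6⟩

/-- Locate a step at which a tracked token moves up. -/
theorem traj_up (l : List (PInj n)) (hl : ∀ g ∈ l, Good g) :
    ∀ x y, l.prod.R x y → x < y →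
    ∃ l1 g l2, l = l1 ++ g :: l2 ∧ ∃ s u, g.R s u ∧ s < u := by
  induction l with
  | nil =>
      intro x y h hlt
      obtain ⟨_, rfl⟩ := h
      omega
  | cons g t ih =>
      intro x y h hlt
      obtain ⟨p, hgp, htp⟩ := h
      rcases Nat.lt_or_ge x p with hcase | hcase
      · exact ⟨[], g, t, rfl, x, p, hgp, hcase⟩
      · obtain ⟨l1, g', l2, rfl, s, u, m1, m2⟩ :=
          ih (fun b hb => hl b (by simp [hb])) p y htp (by omega)
        exact ⟨g :: l1, g', l2, rfl, s, u, m1, m2⟩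

end Traj

section NecV
variable {n : ℕ}

theorem nec_v (hn : 4 ≤ n) {i : ℕ} (hi1 : 1 ≤ i) (hi2 : i ≤ n) :
    ∀ l : List (PInj n), (∀ g ∈ l, Good g) → l.prod = vMap n i → ∃ g ∈ l, g = vMap n i := by
  intro l
  induction l with
  | nil =>
      intro _ hp
      exfalso
      rw [List.prod_nil] at hp
      have h1 : (1 : PInj n).R i i := ⟨⟨hi1, hi2⟩, rfl⟩
      rw [hp] at h1
      exact h1.2.1 rfl
  | cons g t ih =>
      intro hl hp
      have hg : Good g := hl g (by simp)
      rw [List.prod_cons] at hp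
      have hdomg : ∀ z, 1 ≤ z → z ≤ n → z ≠ i → ∃ w, g.R z w := by
        intro z h1 h2 h3
        have hz : (g * t.prod).R z z := by
          rw [hp]; exact ⟨⟨h1, h2⟩, h3, rfl⟩
        obtain ⟨w, hw, _⟩ := hz
        exact ⟨w, hw⟩
      have hpid : IsPartialId g := by
        apply partialId_of_large hn hg
        intro z z' h1 h2 h3 hm hm'
        rcases eq_or_ne z i with rfl | hzi
        · exact hm' (hdomg z' (by omega) h3 (by omega))
        · exact hm (hdomg z h1 (by omega) hzi)
      by_cases hid : ∃ w, g.R i w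
      · have hgone : g = 1 := by
          ext x y
          constructor
          · intro hxy
            exact ⟨g.memL hxy, hpid hxy⟩
          · rintro ⟨hxI, hyx⟩
            have hxd : ∃ w, g.R x w := by
              rcases eq_or_ne x i with rfl | hxi
              · exact hid
              · exact hdomg x hxI.1 hxI.2 hxi
            obtain ⟨w, hw⟩ := hxd
            have hwx := hpid hw
            rw [hwx] at hw
            rw [hyx]
            exact hw
        rw [hgone, one_mul] at hp
        obtain ⟨g', hg', he⟩ := ih (fun b hb => hl b (by simp [hb])) hp
        exact ⟨g', by simp [hg'], he⟩
      · refine ⟨g, by simp, ?_⟩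
        ext x y
        constructor
        · intro hxy
          refine ⟨g.memL hxy, ?_, hpid hxy⟩
          rintro rfl
          exact hid ⟨y, hxy⟩
        · rintro ⟨hxI, hxi, hyx⟩
          obtain ⟨w, hw⟩ := hdomg x hxI.1 hxI.2 hxi
          have hwx := hpid hw
          rw [hwx] at hw
          rw [hyx]
          exact hw

end NecV

section NecC
variable {n : ℕ}

theorem nec_c (hn : 4 ≤ n) (l : List (PInj n)) (hl : ∀ g ∈ l, Good g)
    (hp : l.prod = uMap n (n-2)) : ∃ g ∈ l, g = uMap n (n-2) := by
  classical
  have h13 : l.prod.R 1 3 := by rw [hp]; exact uR13 (by omega) hn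
  obtain ⟨l1, g, l2, rfl, s, u, hsu, hslt⟩ := traj_up l hl 1 3 h13 (by omega)
  have hg : Good g := hl g (by simp)
  refine ⟨g, by simp, ?_⟩
  set f : ℕ → ℕ := fun x => if h : ∃ r, l1.prod.R x r then h.choose else 0 with hf
  have hfspec : ∀ x r, l1.prod.R x r → l1.prod.R x (f x) ∧ f x = r := by
    intro x r hr
    have hex : ∃ r, l1.prod.R x r := ⟨r, hr⟩
    have h1 : l1.prod.R x (f x) := by
      simp only [hf, dif_pos hex]
      exact hex.choose_spec
    exact ⟨h1, l1.prod.func h1 hr⟩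
  have hstep : ∀ x, 1 ≤ x → x ≤ n - 2 → l1.prod.R x (f x) ∧ ∃ w, g.R (f x) w := by
    intro x h1 h2
    have hx : ((l1 ++ g :: l2).prod).R x (x + 2) := by
      rw [hp]
      exact uMap_R.mpr ⟨⟨h1, by omega⟩, ⟨by omega, by omega⟩, Or.inl ⟨h2, rfl⟩⟩
    obtain ⟨r, s', hr, hgs, _⟩ := prod_middle hx
    obtain ⟨ha1, ha2⟩ := hfspec x r hr
    exact ⟨ha1, by rw [ha2]; exact ⟨s', hgs⟩⟩
  have hdom3 : ∀ z1 z2 z3, 1 ≤ z1 → z1 < z2 → z2 < z3 → z3 ≤ n →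
      (¬∃ w, g.R z1 w) → (¬∃ w, g.R z2 w) → (¬∃ w, g.R z3 w) → False := by
    intro z1 z2 z3 hz1 hz2 hz3 hz4 hm1 hm2 hm3
    have hsub : ∀ x ∈ Finset.Icc 1 (n-2), f x ∈ Finset.Icc 1 n \ {z1, z2, z3} := by
      intro x hx
      rw [Finset.mem_Icc] at hx
      obtain ⟨h1, h2⟩ := hstep x hx.1 hx.2
      obtain ⟨w, hw⟩ := h2
      have hb := g.memL hw
      simp only [Finset.mem_sdiff, Finset.mem_Icc, Finset.mem_insert, Finset.mem_singleton]
      refine ⟨⟨hb.1, hb.2⟩, ?_⟩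
      rintro (rfl | rfl | rfl)
      · exact hm1 ⟨w, hw⟩
      · exact hm2 ⟨w, hw⟩
      · exact hm3 ⟨w, hw⟩
    have hinj : Set.InjOn f (Finset.Icc 1 (n-2)) := by
      intro x hx y hy hxy
      simp only [Finset.coe_Icc, Set.mem_Icc] at hx hy
      obtain ⟨h1, _⟩ := hstep x hx.1 hx.2
      obtain ⟨h2, _⟩ := hstep y hy.1 hy.2
      rw [hxy] at h1
      exact l1.prod.inj h1 h2
    have hcard := Finset.card_le_card_of_injOn f hsub hinj
    have hM : ({z1, z2, z3} : Finset ℕ) ⊆ Finset.Icc 1 n := by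
      intro z hz
      simp only [Finset.mem_insert, Finset.mem_singleton] at hz
      rw [Finset.mem_Icc]
      rcases hz with rfl | rfl | rfl <;> omega
    have hMc : ({z1, z2, z3} : Finset ℕ).card = 3 := by
      rw [Finset.card_insert_of_notMem (by simp; omega),
        Finset.card_insert_of_notMem (by simp; omega), Finset.card_singleton]
    rw [Finset.card_sdiff_of_subset hM, Nat.card_Icc, Nat.card_Icc, hMc] at hcard
    omega
  exact eq_cplus hn hg hsu hslt hdom3

theorem nec_u (hn : 4 ≤ n) {i : ℕ} (hi1 : 1 ≤ i) (hi2 : i ≤ n - 4)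
    (l : List (PInj n)) (hl : ∀ g ∈ l, Good g) (hp : l.prod = uMap n i) :
    ∃ g ∈ l, g = uMap n i ∨ g = wMap n i := by
  classical
  have hA : l.prod.R i (i+2) := by
    rw [hp]
    exact uMap_R.mpr ⟨⟨hi1, by omega⟩, ⟨by omega, by omega⟩, Or.inl ⟨le_rfl, rfl⟩⟩
  have hB : l.prod.R (i+4) (i+4) := by
    rw [hp]
    exact uMap_R.mpr ⟨⟨by omega, by omega⟩, ⟨by omega, by omega⟩, Or.inr ⟨le_rfl, rfl⟩⟩
  obtain ⟨l1, g, l2, rfl, s, s', u, u', hs, hs', hgu, hgu', hss, hdec⟩ :=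
    traj_dec l hl i (i+4) (i+2) (i+4) hA hB (by omega) (by omega)
  have hg : Good g := hl g (by simp)
  have hl1good : Good l1.prod := good_prod l1 (fun b hb => hl b (by simp [hb]))
  set f : ℕ → ℕ := fun x => if h : ∃ r, l1.prod.R x r then h.choose else 0 with hf
  have hfspec : ∀ x r, l1.prod.R x r → l1.prod.R x (f x) ∧ f x = r := by
    intro x r hr
    have hex : ∃ r, l1.prod.R x r := ⟨r, hr⟩
    have h1 : l1.prod.R x (f x) := by
      simp only [hf, dif_pos hex]
      exact hex.choose_spec
    exact ⟨h1, l1.prod.func h1 hr⟩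
  have hstep : ∀ x, ((1 ≤ x ∧ x ≤ i) ∨ (i + 4 ≤ x ∧ x ≤ n)) →
      l1.prod.R x (f x) ∧ ∃ w, g.R (f x) w := by
    intro x hxr
    have hx : ∃ y, ((l1 ++ g :: l2).prod).R x y := by
      rcases hxr with ⟨h1, h2⟩ | ⟨h1, h2⟩
      · exact ⟨x + 2, by rw [hp]; exact uMap_R.mpr ⟨⟨h1, by omega⟩, ⟨by omega, by omega⟩,
          Or.inl ⟨h2, rfl⟩⟩⟩
      · exact ⟨x, by rw [hp]; exact uMap_R.mpr ⟨⟨by omega, h2⟩, ⟨by omega, h2⟩,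
          Or.inr ⟨h1, rfl⟩⟩⟩
    obtain ⟨y, hy⟩ := hx
    obtain ⟨r, s2, hr, hgs, _⟩ := prod_middle hy
    obtain ⟨ha1, ha2⟩ := hfspec x r hr
    exact ⟨ha1, by rw [ha2]; exact ⟨s2, hgs⟩⟩
  have hdom4 : ∀ z1 z2 z3 z4, 1 ≤ z1 → z1 < z2 → z2 < z3 → z3 < z4 → z4 ≤ n →
      (¬∃ w, g.R z1 w) → (¬∃ w, g.R z2 w) → (¬∃ w, g.R z3 w) → (¬∃ w, g.R z4 w) → False := by
    intro z1 z2 z3 z4 hz1 hz2 hz3 hz4 hz5 hm1 hm2 hm3 hm4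
    set T : Finset ℕ := Finset.Icc 1 i ∪ Finset.Icc (i+4) n with hT
    have hsub : ∀ x ∈ T, f x ∈ Finset.Icc 1 n \ {z1, z2, z3, z4} := by
      intro x hx
      simp only [hT, Finset.mem_union, Finset.mem_Icc] at hx
      obtain ⟨h1, h2⟩ := hstep x hx
      obtain ⟨w, hw⟩ := h2
      have hb := g.memL hw
      simp only [Finset.mem_sdiff, Finset.mem_Icc, Finset.mem_insert, Finset.mem_singleton]
      refine ⟨⟨hb.1, hb.2⟩, ?_⟩
      rintro (rfl | rfl | rfl | rfl)
      · exact hm1 ⟨w, hw⟩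
      · exact hm2 ⟨w, hw⟩
      · exact hm3 ⟨w, hw⟩
      · exact hm4 ⟨w, hw⟩
    have hinj : Set.InjOn f T := by
      intro x hx y hy hxy
      simp only [hT, Finset.coe_union, Set.mem_union, Finset.coe_Icc, Set.mem_Icc] at hx hy
      obtain ⟨h1, _⟩ := hstep x hx
      obtain ⟨h2, _⟩ := hstep y hy
      rw [hxy] at h1
      exact l1.prod.inj h1 h2
    have hcard := Finset.card_le_card_of_injOn f hsub hinj
    have hM : ({z1, z2, z3, z4} : Finset ℕ) ⊆ Finset.Icc 1 n := by
      intro z hz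
      simp only [Finset.mem_insert, Finset.mem_singleton] at hz
      rw [Finset.mem_Icc]
      rcases hz with rfl | rfl | rfl | rfl <;> omega
    have hMc : ({z1, z2, z3, z4} : Finset ℕ).card = 4 := by
      rw [Finset.card_insert_of_notMem (by simp; omega),
        Finset.card_insert_of_notMem (by simp; omega),
        Finset.card_insert_of_notMem (by simp; omega), Finset.card_singleton]
    have hTc : T.card = i + (n - i - 3) := by
      rw [hT, Finset.card_union_of_disjoint, Nat.card_Icc, Nat.card_Icc]
      · omega
      · rw [Finset.disjoint_left]
        intro z hz1 hz2
        rw [Finset.mem_Icc] at hz1 hz2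
        omega
    rw [Finset.card_sdiff_of_subset hM, Nat.card_Icc, hMc, hTc] at hcard
    omega
  obtain ⟨m, hm1, hm2, hm3, hm4, hguw⟩ := eq_u_or_w hn hg hgu hgu' hss hdec hdom4
  have hfs : f i = s := (hfspec i s hs).2
  have hfs' : f (i+4) = s' := (hfspec (i+4) s' hs').2
  -- i ≤ m
  have hAsub : ∀ x ∈ Finset.Icc 1 i, f x ∈ Finset.Icc 1 m := by
    intro x hx
    rw [Finset.mem_Icc] at hx
    obtain ⟨h1, _⟩ := hstep x (Or.inl hx)
    have hb := l1.prod.memR h1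
    rw [Finset.mem_Icc]
    refine ⟨hb.1, ?_⟩
    rcases Nat.eq_or_lt_of_le hx.2 with rfl | hlt
    · rw [hfs]; exact hm3
    · have := good_order hl1good h1 hs hlt
      omega
  have hAinj : Set.InjOn f (Finset.Icc 1 i) := by
    intro x hx y hy hxy
    simp only [Finset.coe_Icc, Set.mem_Icc] at hx hy
    obtain ⟨h1, _⟩ := hstep x (Or.inl hx)
    obtain ⟨h2, _⟩ := hstep y (Or.inl hy)
    rw [hxy] at h1
    exact l1.prod.inj h1 h2
  have hc1 := Finset.card_le_card_of_injOn f hAsub hAinj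
  rw [Nat.card_Icc, Nat.card_Icc] at hc1
  -- m ≤ i
  have hBsub : ∀ x ∈ Finset.Icc (i+4) n, f x ∈ Finset.Icc (m+4) n := by
    intro x hx
    rw [Finset.mem_Icc] at hx
    obtain ⟨h1, _⟩ := hstep x (Or.inr hx)
    have hb := l1.prod.memR h1
    rw [Finset.mem_Icc]
    refine ⟨?_, hb.2⟩
    rcases Nat.eq_or_lt_of_le hx.1 with heq | hlt
    · rw [← heq, hfs']; exact hm4
    · have := good_order hl1good hs' h1 hlt
      omega
  have hBinj : Set.InjOn f (Finset.Icc (i+4) n) := by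
    intro x hx y hy hxy
    simp only [Finset.coe_Icc, Set.mem_Icc] at hx hy
    obtain ⟨h1, _⟩ := hstep x (Or.inr hx)
    obtain ⟨h2, _⟩ := hstep y (Or.inr hy)
    rw [hxy] at h1
    exact l1.prod.inj h1 h2
  have hc2 := Finset.card_le_card_of_injOn f hBsub hBinj
  rw [Nat.card_Icc, Nat.card_Icc] at hc2
  have hmi : m = i := by omega
  subst hmi
  exact ⟨g, by simp, hguw⟩

end NecC

section Lower
variable {n : ℕ}

theorem lower_bound (hn : 4 ≤ n) (G : Finset (PInj n))
    (hG : Generates n (G : Set (PInj n))) : 3 * n - 6 ≤ G.card := by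
  classical
  have hIOFg : ∀ g ∈ G, Good g := by
    intro g hg
    exact (good_iff g).mp (hG.1 g (Finset.mem_coe.mpr hg))
  have hfac : ∀ a : PInj n, Good a → ∃ l : List (PInj n), (∀ b ∈ l, b ∈ G) ∧ l.prod = a := by
    intro a ha
    obtain ⟨l, h1, h2⟩ := hG.2 a ((good_iff a).mpr ha)
    exact ⟨l, fun b hb => Finset.mem_coe.mp (h1 b hb), h2⟩
  -- all v_i belong to G
  have hv : ∀ i, 1 ≤ i → i ≤ n → vMap n i ∈ G := by
    intro i h1 h2
    obtain ⟨l, hl1, hl2⟩ := hfac (vMap n i) (good_vMap n i)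
    obtain ⟨g, hg1, hg2⟩ := nec_v hn h1 h2 l (fun b hb => hIOFg b (hl1 b hb)) hl2
    rw [← hg2]
    exact hl1 g hg1
  -- c⁺ belongs to G
  have hc : uMap n (n-2) ∈ G := by
    obtain ⟨l, hl1, hl2⟩ := hfac (uMap n (n-2)) (good_uMap n (n-2))
    obtain ⟨g, hg1, hg2⟩ := nec_c hn l (fun b hb => hIOFg b (hl1 b hb)) hl2
    rw [← hg2]
    exact hl1 g hg1
  -- c⁻ belongs to G
  have hcinv : (uMap n (n-2)).inv ∈ G := by
    obtain ⟨l, hl1, hl2⟩ := hfac (uMap n (n-2)).inv (good_inv (good_uMap n (n-2)))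
    have hl2' : (l.reverse.map PInj.inv).prod = uMap n (n-2) := by
      rw [PInj.list_prod_inv, hl2, PInj.inv_inv]
    have hlg : ∀ b ∈ l.reverse.map PInj.inv, Good b := by
      intro b hb
      simp only [List.mem_map, List.mem_reverse] at hb
      obtain ⟨c, hc1, rfl⟩ := hb
      exact good_inv (hIOFg c (hl1 c hc1))
    obtain ⟨g, hg1, hg2⟩ := nec_c hn _ hlg hl2'
    simp only [List.mem_map, List.mem_reverse] at hg1
    obtain ⟨b, hb1, rfl⟩ := hg1
    have : b = (uMap n (n-2)).inv := by
      rw [← hg2, PInj.inv_inv]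
    rw [← this]
    exact hl1 b hb1
  -- u_i or w_i belongs to G
  have hu : ∀ i, 1 ≤ i → i ≤ n - 4 → uMap n i ∈ G ∨ wMap n i ∈ G := by
    intro i h1 h2
    obtain ⟨l, hl1, hl2⟩ := hfac (uMap n i) (good_uMap n i)
    obtain ⟨g, hg1, hg2⟩ := nec_u hn h1 h2 l (fun b hb => hIOFg b (hl1 b hb)) hl2
    rcases hg2 with h | h
    · exact Or.inl (h ▸ hl1 g hg1)
    · exact Or.inr (h ▸ hl1 g hg1)
  -- (u_i)⁻¹ or (w_i)⁻¹ belongs to G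
  have huinv : ∀ i, 1 ≤ i → i ≤ n - 4 → (uMap n i).inv ∈ G ∨ (wMap n i).inv ∈ G := by
    intro i h1 h2
    obtain ⟨l, hl1, hl2⟩ := hfac (uMap n i).inv (good_inv (good_uMap n i))
    have hl2' : (l.reverse.map PInj.inv).prod = uMap n i := by
      rw [PInj.list_prod_inv, hl2, PInj.inv_inv]
    have hlg : ∀ b ∈ l.reverse.map PInj.inv, Good b := by
      intro b hb
      simp only [List.mem_map, List.mem_reverse] at hb
      obtain ⟨c, hc1, rfl⟩ := hb
      exact good_inv (hIOFg c (hl1 c hc1))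
    obtain ⟨g, hg1, hg2⟩ := nec_u hn h1 h2 _ hlg hl2'
    simp only [List.mem_map, List.mem_reverse] at hg1
    obtain ⟨b, hb1, rfl⟩ := hg1
    rcases hg2 with hg2 | hg2
    · left
      have : b = (uMap n i).inv := by rw [← hg2, PInj.inv_inv]
      rw [← this]; exact hl1 b hb1
    · right
      have : b = (wMap n i).inv := by rw [← hg2, PInj.inv_inv]
      rw [← this]; exact hl1 b hb1
  -- assemble the witness subset
  set α : ℕ → PInj n := fun i => if uMap n i ∈ G then uMap n i else wMap n i with hα
  set β : ℕ → PInj n := fun i => if (uMap n i).inv ∈ G then (uMap n i).inv else (wMap n i).inv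
    with hβ
  have hαmem : ∀ i, 1 ≤ i → i ≤ n - 4 → (α i = uMap n i ∨ α i = wMap n i) ∧ α i ∈ G := by
    intro i h1 h2
    by_cases hcase : uMap n i ∈ G
    · refine ⟨Or.inl ?_, ?_⟩ <;> simp only [hα, if_pos hcase]
      exact hcase
    · refine ⟨Or.inr ?_, ?_⟩ <;> simp only [hα, if_neg hcase]
      rcases hu i h1 h2 with h | h
      · exact absurd h hcase
      · exact h
  have hβmem : ∀ i, 1 ≤ i → i ≤ n - 4 →
      (β i = (uMap n i).inv ∨ β i = (wMap n i).inv) ∧ β i ∈ G := by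
    intro i h1 h2
    by_cases hcase : (uMap n i).inv ∈ G
    · refine ⟨Or.inl ?_, ?_⟩ <;> simp only [hβ, if_pos hcase]
      exact hcase
    · refine ⟨Or.inr ?_, ?_⟩ <;> simp only [hβ, if_neg hcase]
      rcases huinv i h1 h2 with h | h
      · exact absurd h hcase
      · exact h
  set A : Finset (PInj n) := (Finset.Icc 1 n).image (vMap n) with hA
  set B : Finset (PInj n) := {uMap n (n-2), (uMap n (n-2)).inv} with hB
  set C : Finset (PInj n) := (Finset.Icc 1 (n-4)).image α with hC
  set D : Finset (PInj n) := (Finset.Icc 1 (n-4)).image β with hD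
  have hsubG : ((A ∪ B) ∪ C) ∪ D ⊆ G := by
    intro g hg
    simp only [hA, hB, hC, hD, Finset.mem_union, Finset.mem_image, Finset.mem_insert,
      Finset.mem_singleton, Finset.mem_Icc] at hg
    rcases hg with ((⟨i, hi, rfl⟩ | (rfl | rfl)) | ⟨i, hi, rfl⟩) | ⟨i, hi, rfl⟩
    · exact hv i hi.1 hi.2
    · exact hc
    · exact hcinv
    · exact (hαmem i hi.1 hi.2).2
    · exact (hβmem i hi.1 hi.2).2
  have hcardA : A.card = n := by
    rw [hA, Finset.card_image_of_injOn, Nat.card_Icc]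
    · omega
    · intro i hi j hj hij
      by_contra hne
      have hi' := Finset.mem_Icc.mp (Finset.mem_coe.mp hi)
      exact v_ne_v hi'.1 hi'.2 hne hij
  have hcardB : B.card = 2 := by
    rw [hB, Finset.card_insert_of_notMem, Finset.card_singleton]
    simp only [Finset.mem_singleton]
    exact u_ne_uinv (by omega) hn
  have hcardC : C.card = n - 4 := by
    rw [hC, Finset.card_image_of_injOn, Nat.card_Icc]
    · omega
    · intro i hi j hj hij
      by_contra hne
      have hi' := Finset.mem_Icc.mp (Finset.mem_coe.mp hi)
      have hj' := Finset.mem_Icc.mp (Finset.mem_coe.mp hj)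
      rcases (hαmem i hi'.1 hi'.2).1 with h1 | h1 <;>
        rcases (hαmem j hj'.1 hj'.2).1 with h2 | h2 <;> rw [h1, h2] at hij
      · rcases lt_or_gt_of_ne hne with hlt | hgt
        · exact u_ne_u hlt (by omega) hn hij
        · exact u_ne_u hgt (by omega) hn hij.symm
      · exact u_ne_w hi'.1 hj'.1 hn hij
      · exact u_ne_w hj'.1 hi'.1 hn hij.symm
      · rcases lt_or_gt_of_ne hne with hlt | hgt
        · exact w_ne_w hlt (by omega) hn hij
        · exact w_ne_w hgt (by omega) hn hij.symm
  have hcardD : D.card = n - 4 := by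
    rw [hD, Finset.card_image_of_injOn, Nat.card_Icc]
    · omega
    · intro i hi j hj hij
      by_contra hne
      have hi' := Finset.mem_Icc.mp (Finset.mem_coe.mp hi)
      have hj' := Finset.mem_Icc.mp (Finset.mem_coe.mp hj)
      rcases (hβmem i hi'.1 hi'.2).1 with h1 | h1 <;>
        rcases (hβmem j hj'.1 hj'.2).1 with h2 | h2 <;> rw [h1, h2] at hij <;>
        have hij' := PInj.inv_injective hij
      · rcases lt_or_gt_of_ne hne with hlt | hgt
        · exact u_ne_u hlt (by omega) hn hij'
        · exact u_ne_u hgt (by omega) hn hij'.symm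
      · exact u_ne_w hi'.1 hj'.1 hn hij'
      · exact u_ne_w hj'.1 hi'.1 hn hij'.symm
      · rcases lt_or_gt_of_ne hne with hlt | hgt
        · exact w_ne_w hlt (by omega) hn hij'
        · exact w_ne_w hgt (by omega) hn hij'.symm
  have hdAB : Disjoint A B := by
    rw [Finset.disjoint_left]
    rintro g hg hg'
    simp only [hA, Finset.mem_image, Finset.mem_Icc] at hg
    simp only [hB, Finset.mem_insert, Finset.mem_singleton] at hg'
    obtain ⟨i, hi, rfl⟩ := hg
    rcases hg' with h | h
    · exact v_ne_u (by omega) hn h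
    · exact v_ne_uinv (by omega) hn h
  have hdABC : Disjoint (A ∪ B) C := by
    rw [Finset.disjoint_left]
    rintro g hg hg'
    simp only [hC, Finset.mem_image, Finset.mem_Icc] at hg'
    obtain ⟨i, hi, rfl⟩ := hg'
    rcases (hαmem i hi.1 hi.2).1 with h1 | h1 <;>
      simp only [hA, hB, Finset.mem_union, Finset.mem_image, Finset.mem_insert,
        Finset.mem_singleton, Finset.mem_Icc] at hg <;>
      rcases hg with ⟨j, hj, hj2⟩ | (hj2 | hj2) <;> rw [h1] at hj2
    · exact v_ne_u hi.1 hn hj2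
    · exact u_ne_u (by omega) le_rfl hn hj2
    · exact u_ne_uinv hi.1 hn hj2
    · exact v_ne_w hi.1 hi.2 hn hj2
    · exact u_ne_w (by omega) hi.1 hn hj2.symm
    · exact w_ne_uinv hi.1 (by omega) hn hj2
  have hdABCD : Disjoint ((A ∪ B) ∪ C) D := by
    rw [Finset.disjoint_left]
    rintro g hg hg'
    simp only [hD, Finset.mem_image, Finset.mem_Icc] at hg'
    obtain ⟨i, hi, rfl⟩ := hg'
    rcases (hβmem i hi.1 hi.2).1 with h1 | h1 <;>
      simp only [hA, hB, hC, Finset.mem_union, Finset.mem_image, Finset.mem_insert,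
        Finset.mem_singleton, Finset.mem_Icc] at hg <;>
      rcases hg with (⟨j, hj, hj2⟩ | (hj2 | hj2)) | ⟨j, hj, hj2⟩ <;> rw [h1] at hj2
    · exact v_ne_uinv hi.1 hn hj2
    · exact u_ne_uinv (by omega) hn hj2.symm
    · exact u_ne_u (by omega) le_rfl hn (PInj.inv_injective hj2)
    · rcases (hαmem j hj.1 hj.2).1 with h2 | h2 <;> rw [h2] at hj2
      · exact u_ne_uinv hj.1 hn hj2
      · exact w_ne_uinv hj.1 hi.1 hn hj2
    · exact v_ne_winv hi.1 hi.2 hn hj2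
    · exact u_ne_winv (by omega) hi.1 hn hj2.symm
    · exact u_ne_w (by omega) hi.1 hn (PInj.inv_injective hj2).symm
    · rcases (hαmem j hj.1 hj.2).1 with h2 | h2 <;> rw [h2] at hj2
      · exact u_ne_winv hj.1 hi.1 hn hj2
      · exact w_ne_winv hj.1 hj.2 hi.1 hn hj2
  have hcard : (((A ∪ B) ∪ C) ∪ D).card = 3 * n - 6 := by
    rw [Finset.card_union_of_disjoint hdABCD, Finset.card_union_of_disjoint hdABC,
      Finset.card_union_of_disjoint hdAB, hcardA, hcardB, hcardC, hcardD]
    omega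
  calc 3 * n - 6 = (((A ∪ B) ∪ C) ∪ D).card := hcard.symm
    _ ≤ G.card := Finset.card_le_card hsubG

end Lower

/-- `rank(IOF_n^par) = 3n - 6` for `n ≥ 4`. -/
theorem stmt15 (n : ℕ) (hn : 4 ≤ n) :
    (∃ G : Finset (PInj n), Generates n (G : Set (PInj n)) ∧ G.card = 3 * n - 6) ∧
    (∀ G : Finset (PInj n), Generates n (G : Set (PInj n)) → 3 * n - 6 ≤ G.card) := by
  constructor
  · exact ⟨Gfin n, Gfin_generates hn, Gfin_card hn⟩
  · intro G hG
    exact lower_bound hn G hG
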